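/- arXiv:2011.12038 — 6 statements merged into one kernel-verified Lean document; each statement's English description precedes it below -/
import Mathlib

section
/- Let Γ be a strongly connected digraph of order n ≥ 2. Then dim(Γ) = n − 1 if and only if Γ is a complete digraph (i.e., for every pair of distinct vertices x, y both arcs (x,y) and (y,x) are present). -/
/-!  Common definitions for weak metric dimension of digraphs.

A digraph is modelled by a vertex type `V` together with an arc relation
`A : V → V → Prop` (simplicity is expressed by `Irreflexive A`). -/

/-- There is a directed walk of length `n` from `x` to `y`. -/
def walkLen {V : Type*} (A : V → V → Prop) : ℕ → V → V → Prop
  | 0 => fun x y => x = y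
  | n + 1 => fun x y => ∃ z, A x z ∧ walkLen A n z y

/-- `∂(x,y)`: the length of a shortest directed path from `x` to `y`. -/
noncomputable def ddist {V : Type*} (A : V → V → Prop) (x y : V) : ℕ :=
  sInf {n | walkLen A n x y}

/-- The two way distance `∂̃(x,y) = (∂(x,y), ∂(y,x))`. -/
noncomputable def twoDist {V : Type*} (A : V → V → Prop) (x y : V) : ℕ × ℕ :=
  (ddist A x y, ddist A y x)

/-- Strong connectivity: any vertex can be reached from any vertex by a directed walk. -/
def IsStronglyConnected {V : Type*} (A : V → V → Prop) : Prop :=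
  ∀ x y : V, ∃ n, walkLen A n x y

/-- `S` is a weakly resolving set: distinct vertices have different tuples of
two way distances from the vertices of `S`. -/
def IsWeaklyResolving {V : Type*} (A : V → V → Prop) (S : Set V) : Prop :=
  ∀ u v : V, (∀ w ∈ S, twoDist A w u = twoDist A w v) → u = v

/-- The weak metric dimension: minimum cardinality of a weakly resolving set. -/
noncomputable def wdim {V : Type*} [Fintype V] (A : V → V → Prop) : ℕ :=
  sInf {k | ∃ S : Finset V, S.card = k ∧ IsWeaklyResolving A ↑S}

/-- The diameter: the maximum of `∂(x,y)` over all ordered pairs of vertices. -/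
noncomputable def diam {V : Type*} [Fintype V] (A : V → V → Prop) : ℕ :=
  sSup {m | ∃ x y : V, ddist A x y = m}

/-- `f(n,d)`: the least positive integer `k` with `k + d^(2k) ≥ n`. -/
noncomputable def fnd (n d : ℕ) : ℕ :=
  sInf {k | 0 < k ∧ n ≤ k + d ^ (2 * k)}

/-- An isomorphism from `(V, A)` onto `(W, B)` exists. -/
def IsIsoTo {V W : Type*} (A : V → V → Prop) (B : W → W → Prop) : Prop :=
  ∃ e : V ≃ W, ∀ x y, A x y ↔ B (e x) (e y)

/-- The digraph of Example 2.3: vertices `v_1, …, v_n` are the elements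
`0, …, n-1` of `Fin n` (so `v_i` is `i - 1`). -/
def egArc (n d : ℕ) : Fin n → Fin n → Prop := fun x y =>
  (x.val = n - 1 ∧ y.val ≤ n - d) ∨
  (x.val ≤ n - d ∧ y.val = n - d + 1) ∨
  (n - d + 1 ≤ x.val ∧ x.val ≤ n - 2 ∧ y.val = x.val + 1)

/-- The `r`-th (0-based) coordinate of the tuple `v_{j+1}` in Construction 2.4;
it lies in `{1, …, d}` and `j = Σ_r (coord r - 1) d^r`. -/
def gcoord (d j r : ℕ) : ℕ := j / d ^ r % d + 1

/-- The arc relation of Construction 2.4, with the `u`-vertices `Fin k` on the left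
and the `v`-vertices `Fin m` on the right of the sum. -/
def gammaArcKM (d k : ℕ) {m : ℕ} : Fin k ⊕ Fin m → Fin k ⊕ Fin m → Prop
  | .inl _, .inl _ => False
  | .inl i, .inr j => gcoord d j.val (2 * i.val) = 1
  | .inr j, .inl i => gcoord d j.val (2 * i.val + 1) = 1
  | .inr j, .inr l => j ≠ l ∧ ∀ r < k,
      gcoord d l.val (2 * r) ≤ gcoord d j.val (2 * r) + 1 ∧
      gcoord d j.val (2 * r + 1) ≤ gcoord d l.val (2 * r + 1) + 1

/-- The arc relation of `Γ̄`: `Γ` of Construction 2.4 together with symmetric arcs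
between any two distinct `u`-vertices. -/
def gammaBarArcKM (d k : ℕ) {m : ℕ} : Fin k ⊕ Fin m → Fin k ⊕ Fin m → Prop
  | .inl i, .inl i' => i ≠ i'
  | x, y => gammaArcKM d k x y

/-- The directed cycle of length `m` on `Fin m`. -/
def cycArc (m : ℕ) [NeZero m] : Fin m → Fin m → Prop := fun x y => y = x + 1

/-- `σ` is an automorphism of the digraph `(V, A)`. -/
def IsDigraphAuto {V : Type*} (A : V → V → Prop) (σ : V ≃ V) : Prop :=
  ∀ a b, A a b ↔ A (σ a) (σ b)

/-- Vertex-transitivity. -/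
def IsVertexTransitive {V : Type*} (A : V → V → Prop) : Prop :=
  ∀ x y : V, ∃ σ : V ≃ V, IsDigraphAuto A σ ∧ σ x = y

/-- Weak distance-transitivity. -/
def IsWeaklyDistanceTransitive {V : Type*} (A : V → V → Prop) : Prop :=
  ∀ x y x' y' : V, twoDist A x y = twoDist A x' y' →
    ∃ σ : V ≃ V, IsDigraphAuto A σ ∧ σ x = x' ∧ σ y = y'

/-- Weak distance-regularity. -/
noncomputable def IsWeaklyDistanceRegular {V : Type*} (A : V → V → Prop) : Prop :=
  ∀ i j : ℕ × ℕ, (∃ a b : V, twoDist A a b = i) → (∃ a b : V, twoDist A a b = j) →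
    ∀ x y x' y' : V, twoDist A x y = twoDist A x' y' →
      Set.ncard {z : V | twoDist A x z = i ∧ twoDist A z y = j} =
      Set.ncard {z : V | twoDist A x' z = i ∧ twoDist A z y' = j}

/-- The complete digraph `K_t`. -/
def Krel (t : ℕ) : Fin t → Fin t → Prop := fun x y => x ≠ y

/-- The null digraph `K̄_t`. -/
def Nrel (t : ℕ) : Fin t → Fin t → Prop := fun _ _ => False

/-- The directed path `P_2` of length `1`. -/
def P2rel : Fin 2 → Fin 2 → Prop := fun x y => x = 0 ∧ y = 1

/-- The digraph `G_1` on `{0,1,2}` with arcs `(0,1),(1,2),(2,1),(2,0)`. -/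
def G1rel : Fin 3 → Fin 3 → Prop := fun x y =>
  (x = 0 ∧ y = 1) ∨ (x = 1 ∧ y = 2) ∨ (x = 2 ∧ y = 1) ∨ (x = 2 ∧ y = 0)

/-- The digraph `G_2` on `{0,1,2}` with arcs `(0,1),(1,0),(1,2),(2,1),(2,0)`. -/
def G2rel : Fin 3 → Fin 3 → Prop := fun x y =>
  (x = 0 ∧ y = 1) ∨ (x = 1 ∧ y = 0) ∨ (x = 1 ∧ y = 2) ∨ (x = 2 ∧ y = 1) ∨ (x = 2 ∧ y = 0)

/-- The generalized lexicographic product `G[H₀, H₁, H₂]` for a digraph `G` on `{0,1,2}`. -/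
def glex3 {α β γ : Type*} (G : Fin 3 → Fin 3 → Prop)
    (H0 : α → α → Prop) (H1 : β → β → Prop) (H2 : γ → γ → Prop) :
    α ⊕ β ⊕ γ → α ⊕ β ⊕ γ → Prop
  | .inl x, .inl y => H0 x y
  | .inl _, .inr (.inl _) => G 0 1
  | .inl _, .inr (.inr _) => G 0 2
  | .inr (.inl _), .inl _ => G 1 0
  | .inr (.inl x), .inr (.inl y) => H1 x y
  | .inr (.inl _), .inr (.inr _) => G 1 2
  | .inr (.inr _), .inl _ => G 2 0
  | .inr (.inr _), .inr (.inl _) => G 2 1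
  | .inr (.inr x), .inr (.inr y) => H2 x y

/-- A clique in a digraph: the two way distance between any two distinct
vertices of `S` is `(1,1)`. -/
noncomputable def DClique {V : Type*} (A : V → V → Prop) (S : Set V) : Prop :=
  ∀ u ∈ S, ∀ v ∈ S, u ≠ v → twoDist A u v = (1, 1)

/-- An independent set in a digraph: no arcs inside `R`. -/
def DIndependent {V : Type*} (A : V → V → Prop) (R : Set V) : Prop :=
  ∀ u ∈ R, ∀ v ∈ R, ¬ A u v

section AuxWdim

variable {V : Type*} {A : V → V → Prop}

lemma walkLen_one_iff {x y : V} : walkLen A 1 x y ↔ A x y := by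
  constructor
  · rintro ⟨z, hz, h0⟩
    have hz' : z = y := h0
    subst hz'; exact hz
  · intro h; exact ⟨y, h, rfl⟩

lemma ddist_self (x : V) : ddist A x x = 0 :=
  Nat.sInf_eq_zero.mpr (Or.inl rfl)

lemma ddist_eq_zero_iff (hsc : IsStronglyConnected A) {x y : V} :
    ddist A x y = 0 ↔ x = y := by
  constructor
  · intro h
    have hmem : walkLen A (ddist A x y) x y := Nat.sInf_mem (hsc x y)
    rw [h] at hmem
    exact hmem
  · rintro rfl; exact ddist_self x

lemma ddist_eq_one (hsc : IsStronglyConnected A) {x y : V} (hxy : x ≠ y) (h : A x y) :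
    ddist A x y = 1 := by
  have h1 : ddist A x y ≤ 1 := Nat.sInf_le (walkLen_one_iff.mpr h)
  have h0 : ddist A x y ≠ 0 := fun hh => hxy ((ddist_eq_zero_iff hsc).mp hh)
  omega

lemma resolving_of_compl_small [Fintype V] [DecidableEq V]
    (hsc : IsStronglyConnected A) (S : Finset V)
    (h : (Sᶜ).card ≤ 1) : IsWeaklyResolving A ↑S := by
  intro u v huv
  by_contra hne
  rcases Classical.em (u ∈ S) with h1 | h1
  · have heq := huv u h1
    have h2 : ddist A u v = 0 := by
      have := congrArg Prod.fst heq
      simpa [twoDist, ddist_self] using this.symm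
    exact hne ((ddist_eq_zero_iff hsc).mp h2)
  rcases Classical.em (v ∈ S) with h2 | h2
  · have heq := huv v h2
    have h3 : ddist A v u = 0 := by
      have := congrArg Prod.fst heq
      simpa [twoDist, ddist_self] using this
    exact hne ((ddist_eq_zero_iff hsc).mp h3).symm
  · have hu : u ∈ Sᶜ := Finset.mem_compl.mpr h1
    have hv : v ∈ Sᶜ := Finset.mem_compl.mpr h2
    have := Finset.one_lt_card.mpr ⟨u, hu, v, hv, hne⟩
    omega

end AuxWdim

/-- Corollary 2.2. For a digraph of order `n ≥ 2`,
`dim(Γ) = n - 1` iff `Γ` is complete. -/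
theorem wdim_eq_card_sub_one_iff_complete {V : Type*} [Fintype V] (A : V → V → Prop)
    (hirr : Irreflexive A) (hsc : IsStronglyConnected A)
    (n : ℕ) (hn : Fintype.card V = n) (h2 : 2 ≤ n) :
    wdim A = n - 1 ↔ ∀ x y : V, x ≠ y → A x y ∧ A y x := by
  classical
  have hVne : Nonempty V := by
    rw [← Fintype.card_pos_iff, hn]; omega
  obtain ⟨x₀⟩ := hVne
  have hcompl₀ : ((Finset.univ.erase x₀)ᶜ : Finset V).card ≤ 1 := by
    rw [Finset.card_compl, Finset.card_erase_of_mem (Finset.mem_univ _), Finset.card_univ]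
    omega
  have hupper : wdim A ≤ n - 1 := by
    apply Nat.sInf_le
    refine ⟨Finset.univ.erase x₀, ?_, resolving_of_compl_small hsc _ hcompl₀⟩
    rw [Finset.card_erase_of_mem (Finset.mem_univ _), Finset.card_univ, hn]
  constructor
  · intro hdim
    have hpair : ∀ u v : V, u ≠ v → ∀ w, w ≠ u → w ≠ v →
        twoDist A w u = twoDist A w v := by
      intro u v huv
      set S := (Finset.univ.erase u).erase v with hS
      have hvmem : v ∈ Finset.univ.erase u :=
        Finset.mem_erase.mpr ⟨Ne.symm huv, Finset.mem_univ _⟩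
      have hScard : S.card = n - 2 := by
        rw [hS, Finset.card_erase_of_mem hvmem,
          Finset.card_erase_of_mem (Finset.mem_univ _), Finset.card_univ, hn]
        omega
      have hnotres : ¬ IsWeaklyResolving A ↑S := by
        intro hres
        have : wdim A ≤ n - 2 := Nat.sInf_le ⟨S, hScard, hres⟩
        omega
      rw [IsWeaklyResolving] at hnotres
      push_neg at hnotres
      obtain ⟨u', v', h1, h2⟩ := hnotres
      have hmemS : ∀ z : V, z ≠ u → z ≠ v → z ∈ S := by
        intro z h3 h4
        simp [hS, h3, h4]
      have hu'S : u' ∉ S := by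
        intro h
        have heq := h1 u' (Finset.mem_coe.mpr h)
        have h0 : ddist A u' v' = 0 := by
          have := congrArg Prod.fst heq
          simpa [twoDist, ddist_self] using this.symm
        exact h2 ((ddist_eq_zero_iff hsc).mp h0)
      have hv'S : v' ∉ S := by
        intro h
        have heq := h1 v' (Finset.mem_coe.mpr h)
        have h0 : ddist A v' u' = 0 := by
          have := congrArg Prod.fst heq
          simpa [twoDist, ddist_self] using this
        exact h2 ((ddist_eq_zero_iff hsc).mp h0).symm
      have hu'uv : u' = u ∨ u' = v := by
        by_contra hc; push_neg at hc; exact hu'S (hmemS u' hc.1 hc.2)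
      have hv'uv : v' = u ∨ v' = v := by
        by_contra hc; push_neg at hc; exact hv'S (hmemS v' hc.1 hc.2)
      intro w hwu hwv
      have hwS : w ∈ (↑S : Set V) := Finset.mem_coe.mpr (hmemS w hwu hwv)
      rcases hu'uv with rfl | rfl <;> rcases hv'uv with rfl | rfl
      · exact absurd rfl h2
      · exact h1 w hwS
      · exact (h1 w hwS).symm
      · exact absurd rfl h2
    have key : ∀ a b : V, a ≠ b → A a b := by
      intro a b hab
      by_contra hA
      have hd0 : ddist A a b ≠ 0 := fun h => hab ((ddist_eq_zero_iff hsc).mp h)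
      have hmem : walkLen A (ddist A a b) a b := Nat.sInf_mem (hsc a b)
      obtain ⟨m, hm⟩ : ∃ m, ddist A a b = m + 1 :=
        ⟨ddist A a b - 1, by omega⟩
      rw [hm] at hmem
      obtain ⟨z, haz, hzb⟩ := hmem
      have hza : z ≠ a := fun h => hirr a (h ▸ haz)
      have hzb' : z ≠ b := by rintro rfl; exact hA haz
      have heq := hpair z b hzb' a (Ne.symm hza) hab
      have h1 : ddist A a z = ddist A a b := congrArg Prod.fst heq
      have h2 : ddist A a z = 1 := ddist_eq_one hsc (Ne.symm hza) haz
      have hm0 : m = 0 := by omega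
      rw [hm0] at hzb
      exact hzb' hzb
    exact fun x y hxy => ⟨key x y hxy, key y x hxy.symm⟩
  · intro hcomp
    have hlower : n - 1 ≤ wdim A := by
      apply le_csInf
      · exact ⟨n - 1, Finset.univ.erase x₀,
          by rw [Finset.card_erase_of_mem (Finset.mem_univ _), Finset.card_univ, hn],
          resolving_of_compl_small hsc _ hcompl₀⟩
      · rintro b ⟨S, hScard, hres⟩
        by_contra hlt
        push_neg at hlt
        have hcard2 : 1 < (Sᶜ : Finset V).card := by
          rw [Finset.card_compl, hScard, hn]; omega
        obtain ⟨x, hx, y, hy, hxy⟩ := Finset.one_lt_card.mp hcard2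
        apply hxy
        apply hres
        intro w hw
        have hwS : w ∈ S := Finset.mem_coe.mp hw
        have hwx : w ≠ x := by rintro rfl; exact Finset.mem_compl.mp hx hwS
        have hwy : w ≠ y := by rintro rfl; exact Finset.mem_compl.mp hy hwS
        have e1 := hcomp w x hwx
        have e2 := hcomp w y hwy
        rw [twoDist, twoDist, ddist_eq_one hsc hwx e1.1, ddist_eq_one hsc hwx.symm e1.2,
          ddist_eq_one hsc hwy e2.1, ddist_eq_one hsc hwy.symm e2.2]
    omega
end

section
/- Given positive integers n and d with 3 ≤ d+1 ≤ n, let Γ be the digraph with vertex set {v_1, v_2, …, v_n} and arc set (⋃_{i=1}^{n−d+1} {(v_n, v_i), (v_i, v_{n−d+2})}) ∪ {(v_j, v_{j+1}) : j = n−d+2, …, n−1}. Then Γ is strongly connected, has n vertices, has diameter d, and dim(Γ) = n − d. -/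
/-! ### Auxiliary lemmas -/

theorem myWalkLen_trans {V : Type*} {A : V → V → Prop} :
    ∀ (m : ℕ) {k : ℕ} {x y z : V}, walkLen A m x y → walkLen A k y z →
      walkLen A (m + k) x z := by
  intro m
  induction m with
  | zero =>
    intro k x y z h1 h2
    have hxy : x = y := h1
    rw [Nat.zero_add, hxy]; exact h2
  | succ m ih =>
    intro k x y z h1 h2
    obtain ⟨w, haw, hw⟩ := h1
    rw [Nat.succ_add]
    exact ⟨w, haw, ih hw h2⟩

theorem myDdist_le {V : Type*} {A : V → V → Prop} {m : ℕ} {x y : V}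
    (h : walkLen A m x y) : ddist A x y ≤ m := Nat.sInf_le h

theorem myPot_fwd {V : Type*} {A : V → V → Prop} {φ : V → ℕ}
    (h : ∀ a b, A a b → φ b ≤ φ a + 1) :
    ∀ (m : ℕ) (x y : V), walkLen A m x y → φ y ≤ φ x + m := by
  intro m
  induction m with
  | zero => intro x y hw; have hxy : x = y := hw; subst hxy; omega
  | succ m ih =>
    intro x y hw
    obtain ⟨z, haz, hz⟩ := hw
    have := ih z y hz
    have := h x z haz
    omega

theorem myPot_bwd {V : Type*} {A : V → V → Prop} {φ : V → ℕ}
    (h : ∀ a b, A a b → φ a ≤ φ b + 1) :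
    ∀ (m : ℕ) (x y : V), walkLen A m x y → φ x ≤ φ y + m := by
  intro m
  induction m with
  | zero => intro x y hw; have : x = y := hw; subst this; omega
  | succ m ih =>
    intro x y hw
    obtain ⟨z, haz, hz⟩ := hw
    have := ih z y hz
    have := h x z haz
    omega

theorem myEq_of_ddist_zero {V : Type*} {A : V → V → Prop}
    (hsc : IsStronglyConnected A) {x y : V} (h : ddist A x y = 0) : x = y := by
  obtain ⟨m, hm⟩ := hsc x y
  have hmem : sInf {k | walkLen A k x y} ∈ {k | walkLen A k x y} := Nat.sInf_mem ⟨m, hm⟩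
  have h' : sInf {k | walkLen A k x y} = 0 := h
  rw [h'] at hmem
  exact hmem

theorem myWalkLen_auto {V : Type*} {A : V → V → Prop} {σ : V ≃ V}
    (h : IsDigraphAuto A σ) :
    ∀ (m : ℕ) (x y : V), walkLen A m x y → walkLen A m (σ x) (σ y) := by
  intro m
  induction m with
  | zero => intro x y hw; have : x = y := hw; subst this; rfl
  | succ m ih =>
    intro x y hw
    obtain ⟨z, haz, hz⟩ := hw
    exact ⟨σ z, (h x z).mp haz, ih z y hz⟩

theorem myAuto_symm {V : Type*} {A : V → V → Prop} {σ : V ≃ V}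
    (h : IsDigraphAuto A σ) : IsDigraphAuto A σ.symm := by
  intro a b
  rw [h (σ.symm a) (σ.symm b)]
  simp

theorem myDdist_auto {V : Type*} {A : V → V → Prop} {σ : V ≃ V}
    (h : IsDigraphAuto A σ) (x y : V) :
    ddist A (σ x) (σ y) = ddist A x y := by
  unfold ddist
  congr 1
  ext m
  constructor
  · intro hm
    have := myWalkLen_auto (myAuto_symm h) m _ _ hm
    simpa using this
  · exact myWalkLen_auto h m x y

theorem myTwoDist_auto {V : Type*} {A : V → V → Prop} {σ : V ≃ V}
    (h : IsDigraphAuto A σ) (x y : V) :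
    twoDist A (σ x) (σ y) = twoDist A x y := by
  unfold twoDist
  rw [myDdist_auto h, myDdist_auto h]

/-! ### Concrete walks in `egArc n d` -/

theorem egChain (n d : ℕ) (hd : 2 ≤ d) (hn : d + 1 ≤ n) :
    ∀ (t : ℕ) (x y : Fin n), n - d + 1 ≤ x.val → x.val + t = y.val →
      walkLen (egArc n d) t x y := by
  intro t
  induction t with
  | zero =>
    intro x y h1 h2
    exact Fin.ext (by omega)
  | succ t ih =>
    intro x y h1 h2
    have hy := y.isLt
    have hx1 : x.val + 1 < n := by omega
    refine ⟨⟨x.val + 1, hx1⟩, ?_, ih ⟨x.val + 1, hx1⟩ y (by simp; omega) (by simp; omega)⟩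
    exact Or.inr (Or.inr ⟨h1, by omega, rfl⟩)

theorem egArc1 (n d : ℕ) (hd : 2 ≤ d) (hn : d + 1 ≤ n) (x y : Fin n)
    (hx : x.val = n - 1) (hy : y.val ≤ n - d) : walkLen (egArc n d) 1 x y :=
  ⟨y, Or.inl ⟨hx, hy⟩, rfl⟩

theorem egArc2 (n d : ℕ) (hd : 2 ≤ d) (hn : d + 1 ≤ n) (x y : Fin n)
    (hx : x.val ≤ n - d) (hy : y.val = n - d + 1) : walkLen (egArc n d) 1 x y :=
  ⟨y, Or.inr (Or.inl ⟨hx, hy⟩), rfl⟩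

/-- Walk from an `L`-vertex to a chain vertex. -/
theorem egWalkA (n d : ℕ) (hd : 2 ≤ d) (hn : d + 1 ≤ n) (x y : Fin n) (m : ℕ)
    (hx : x.val ≤ n - d) (hy : n - d + 1 ≤ y.val) (hm : m = y.val - (n - d)) :
    walkLen (egArc n d) m x y := by
  have hy' := y.isLt
  have hmid : n - d + 1 < n := by omega
  have w1 : walkLen (egArc n d) 1 x ⟨n - d + 1, hmid⟩ :=
    egArc2 n d hd hn x _ hx rfl
  have w2 : walkLen (egArc n d) (y.val - (n - d + 1)) ⟨n - d + 1, hmid⟩ y :=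
    egChain n d hd hn (y.val - (n - d + 1)) ⟨n - d + 1, hmid⟩ y
      (le_refl (n - d + 1)) ((by omega : n - d + 1 + (y.val - (n - d + 1)) = y.val))
  have := myWalkLen_trans 1 w1 w2
  have heq : m = 1 + (y.val - (n - d + 1)) := by omega
  rw [heq]
  exact this

/-- Walk from a chain vertex to an `L`-vertex. -/
theorem egWalkB (n d : ℕ) (hd : 2 ≤ d) (hn : d + 1 ≤ n) (x y : Fin n) (m : ℕ)
    (hx : n - d + 1 ≤ x.val) (hy : y.val ≤ n - d) (hm : m = n - x.val) :
    walkLen (egArc n d) m x y := by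
  have hx' := x.isLt
  have hlast : n - 1 < n := by omega
  have w1 : walkLen (egArc n d) (n - 1 - x.val) x ⟨n - 1, hlast⟩ :=
    egChain n d hd hn (n - 1 - x.val) x ⟨n - 1, hlast⟩ hx
      ((by omega : x.val + (n - 1 - x.val) = n - 1))
  have w2 : walkLen (egArc n d) 1 ⟨n - 1, hlast⟩ y :=
    egArc1 n d hd hn _ y rfl hy
  have := myWalkLen_trans _ w1 w2
  have heq : m = (n - 1 - x.val) + 1 := by omega
  rw [heq]
  exact this

/-- Walk between two `L`-vertices (length `d`). -/
theorem egWalkC (n d : ℕ) (hd : 2 ≤ d) (hn : d + 1 ≤ n) (x y : Fin n) (m : ℕ)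
    (hx : x.val ≤ n - d) (hy : y.val ≤ n - d) (hm : m = d) :
    walkLen (egArc n d) m x y := by
  have hlast : n - 1 < n := by omega
  have w1 : walkLen (egArc n d) (d - 1) x ⟨n - 1, hlast⟩ :=
    egWalkA n d hd hn x ⟨n - 1, hlast⟩ (d - 1) hx
      ((by omega : n - d + 1 ≤ n - 1)) ((by omega : d - 1 = n - 1 - (n - d)))
  have w2 : walkLen (egArc n d) 1 ⟨n - 1, hlast⟩ y :=
    egArc1 n d hd hn _ y rfl hy
  have := myWalkLen_trans _ w1 w2
  have heq : m = (d - 1) + 1 := by omega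
  rw [heq]
  exact this

/-! ### Distances from and to the vertex `0` -/

def egPhi (n d : ℕ) (x : Fin n) : ℕ :=
  if x.val ≤ n - d then (if x.val = 0 then 0 else d) else x.val - (n - d)

def egPsi (n d : ℕ) (x : Fin n) : ℕ :=
  if x.val ≤ n - d then (if x.val = 0 then 0 else d) else n - x.val

theorem egWalkPhi (n d : ℕ) (hd : 2 ≤ d) (hn : d + 1 ≤ n) (x : Fin n) :
    walkLen (egArc n d) (egPhi n d x) (⟨0, by omega⟩ : Fin n) x := by
  have hx := x.isLt
  unfold egPhi
  split_ifs with h1 h2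
  · exact Fin.ext (by simp [h2])
  · exact egWalkC n d hd hn _ x d ((Nat.zero_le _ : 0 ≤ n - d)) h1 rfl
  · exact egWalkA n d hd hn _ x _ ((Nat.zero_le _ : 0 ≤ n - d)) (by omega) rfl

theorem egWalkPsi (n d : ℕ) (hd : 2 ≤ d) (hn : d + 1 ≤ n) (x : Fin n) :
    walkLen (egArc n d) (egPsi n d x) x (⟨0, by omega⟩ : Fin n) := by
  have hx := x.isLt
  unfold egPsi
  split_ifs with h1 h2
  · exact Fin.ext (by simp [h2])
  · exact egWalkC n d hd hn x _ d h1 ((Nat.zero_le _ : 0 ≤ n - d)) rfl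
  · exact egWalkB n d hd hn x _ _ (by omega) ((Nat.zero_le _ : 0 ≤ n - d)) rfl

theorem egPhiCond (n d : ℕ) (hd : 2 ≤ d) (hn : d + 1 ≤ n) :
    ∀ a b : Fin n, egArc n d a b → egPhi n d b ≤ egPhi n d a + 1 := by
  intro a b hab
  have ha := a.isLt
  have hb := b.isLt
  unfold egArc at hab
  unfold egPhi
  split_ifs <;> omega

theorem egPsiCond (n d : ℕ) (hd : 2 ≤ d) (hn : d + 1 ≤ n) :
    ∀ a b : Fin n, egArc n d a b → egPsi n d a ≤ egPsi n d b + 1 := by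
  intro a b hab
  have ha := a.isLt
  have hb := b.isLt
  unfold egArc at hab
  unfold egPsi
  split_ifs <;> omega

theorem egDdistFromZero (n d : ℕ) (hd : 2 ≤ d) (hn : d + 1 ≤ n) (x : Fin n) :
    ddist (egArc n d) (⟨0, by omega⟩ : Fin n) x = egPhi n d x := by
  refine le_antisymm (myDdist_le (egWalkPhi n d hd hn x)) ?_
  have hne : {m | walkLen (egArc n d) m (⟨0, by omega⟩ : Fin n) x}.Nonempty :=
    ⟨_, egWalkPhi n d hd hn x⟩
  have hmem : walkLen (egArc n d) (ddist (egArc n d) (⟨0, by omega⟩ : Fin n) x)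
      (⟨0, by omega⟩ : Fin n) x := Nat.sInf_mem hne
  have := myPot_fwd (egPhiCond n d hd hn) _ _ _ hmem
  have h0 : egPhi n d (⟨0, by omega⟩ : Fin n) = 0 := by simp [egPhi]
  omega

theorem egDdistToZero (n d : ℕ) (hd : 2 ≤ d) (hn : d + 1 ≤ n) (x : Fin n) :
    ddist (egArc n d) x (⟨0, by omega⟩ : Fin n) = egPsi n d x := by
  refine le_antisymm (myDdist_le (egWalkPsi n d hd hn x)) ?_
  have hne : {m | walkLen (egArc n d) m x (⟨0, by omega⟩ : Fin n)}.Nonempty :=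
    ⟨_, egWalkPsi n d hd hn x⟩
  have hmem : walkLen (egArc n d) (ddist (egArc n d) x (⟨0, by omega⟩ : Fin n))
      x (⟨0, by omega⟩ : Fin n) := Nat.sInf_mem hne
  have := myPot_bwd (egPsiCond n d hd hn) _ _ _ hmem
  have h0 : egPsi n d (⟨0, by omega⟩ : Fin n) = 0 := by simp [egPsi]
  omega

theorem egSC (n d : ℕ) (hd : 2 ≤ d) (hn : d + 1 ≤ n) :
    IsStronglyConnected (egArc n d) := by
  intro x y
  exact ⟨_, myWalkLen_trans _ (egWalkPsi n d hd hn x) (egWalkPhi n d hd hn y)⟩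

theorem egShort (n d : ℕ) (hd : 2 ≤ d) (hn : d + 1 ≤ n) (x y : Fin n) :
    ∃ m ≤ d, walkLen (egArc n d) m x y := by
  have hx := x.isLt
  have hy := y.isLt
  by_cases h1 : x.val ≤ n - d
  · by_cases h2 : y.val ≤ n - d
    · exact ⟨d, le_refl d, egWalkC n d hd hn x y d h1 h2 rfl⟩
    · exact ⟨y.val - (n - d), by omega, egWalkA n d hd hn x y _ h1 (by omega) rfl⟩
  · by_cases h2 : y.val ≤ n - d
    · exact ⟨n - x.val, by omega, egWalkB n d hd hn x y _ (by omega) h2 rfl⟩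
    · by_cases h3 : x.val ≤ y.val
      · exact ⟨y.val - x.val, by omega, egChain n d hd hn _ x y (by omega) (by omega)⟩
      · have h0 : (0 : ℕ) < n := by omega
        have w1 : walkLen (egArc n d) (n - x.val) x ⟨0, h0⟩ :=
          egWalkB n d hd hn x _ _ (by omega) ((Nat.zero_le _ : 0 ≤ n - d)) rfl
        have w2 : walkLen (egArc n d) (y.val - (n - d)) ⟨0, h0⟩ y :=
          egWalkA n d hd hn _ y _ ((Nat.zero_le _ : 0 ≤ n - d)) (by omega) rfl
        exact ⟨_, by omega, myWalkLen_trans _ w1 w2⟩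

theorem egDiam (n d : ℕ) (hd : 2 ≤ d) (hn : d + 1 ≤ n) :
    diam (egArc n d) = d := by
  have h0 : (0 : ℕ) < n := by omega
  have hnd : n - d < n := by omega
  have hub : ∀ m ∈ {m | ∃ x y : Fin n, ddist (egArc n d) x y = m}, m ≤ d := by
    rintro m ⟨x, y, rfl⟩
    obtain ⟨k, hk, hw⟩ := egShort n d hd hn x y
    exact le_trans (myDdist_le hw) hk
  have hmem : d ∈ {m | ∃ x y : Fin n, ddist (egArc n d) x y = m} := by
    refine ⟨⟨0, h0⟩, ⟨n - d, hnd⟩, ?_⟩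
    rw [egDdistFromZero n d hd hn]
    unfold egPhi
    rw [if_pos (le_refl (n - d)), if_neg ((by omega : ¬ (n - d = 0)))]
  unfold diam
  exact le_antisymm (csSup_le ⟨d, hmem⟩ hub) (le_csSup ⟨d, hub⟩ hmem)

theorem egWdimUB (n d : ℕ) (hd : 2 ≤ d) (hn : d + 1 ≤ n) :
    ∃ S : Finset (Fin n), S.card = n - d ∧ IsWeaklyResolving (egArc n d) ↑S := by
  have h0 : (0 : ℕ) < n := by omega
  have hle : n - d ≤ n := by omega
  refine ⟨Finset.image (Fin.castLE hle) Finset.univ, ?_, ?_⟩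
  · rw [Finset.card_image_of_injective _ (Fin.castLE_injective hle)]
    simp
  · intro u v huv
    have hmemS : ∀ x : Fin n, x.val < n - d →
        x ∈ Finset.image (Fin.castLE hle) Finset.univ := by
      intro x hxv
      refine Finset.mem_image.mpr ⟨⟨x.val, hxv⟩, Finset.mem_univ _, Fin.ext rfl⟩
    have hsc := egSC n d hd hn
    have hself : ∀ w : Fin n, twoDist (egArc n d) w w = (0, 0) := by
      intro w
      have hw0 : walkLen (egArc n d) 0 w w := rfl
      have : ddist (egArc n d) w w = 0 := Nat.le_zero.mp (myDdist_le hw0)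
      simp [twoDist, this]
    by_cases hu : u.val < n - d
    · have h := huv u (hmemS u hu)
      rw [hself u] at h
      exact myEq_of_ddist_zero hsc (by have := congrArg Prod.fst h; simpa [twoDist] using this.symm)
    · by_cases hv : v.val < n - d
      · have h := huv v (hmemS v hv)
        rw [hself v] at h
        exact myEq_of_ddist_zero hsc (by have := congrArg Prod.snd h; simpa [twoDist] using this)
      · have h := huv ⟨0, h0⟩ (hmemS _ (by simp; omega))
        have hu' : twoDist (egArc n d) ⟨0, h0⟩ u = (egPhi n d u, egPsi n d u) := by
          unfold twoDist
          rw [egDdistFromZero n d hd hn, egDdistToZero n d hd hn]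
        have hv' : twoDist (egArc n d) ⟨0, h0⟩ v = (egPhi n d v, egPsi n d v) := by
          unfold twoDist
          rw [egDdistFromZero n d hd hn, egDdistToZero n d hd hn]
        rw [hu', hv'] at h
        have h1 := congrArg Prod.fst h
        have h2 := congrArg Prod.snd h
        simp only [egPhi, egPsi] at h1 h2
        have hxu := u.isLt
        have hxv' := v.isLt
        apply Fin.ext
        split_ifs at h1 h2 <;> omega

theorem egWdimLB (n d : ℕ) (hd : 2 ≤ d) (hn : d + 1 ≤ n) (k : ℕ)
    (S : Finset (Fin n)) (hcard : S.card = k)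
    (hres : IsWeaklyResolving (egArc n d) ↑S) : n - d ≤ k := by
  by_contra hlt
  push_neg at hlt
  -- the set L of vertices with value ≤ n - d
  set T : Finset (Fin n) := Finset.univ.filter (fun x : Fin n => x.val ≤ n - d) with hT
  have hle1 : n - d + 1 ≤ n := by omega
  have hTcard : T.card = n - d + 1 := by
    have : T = Finset.image (Fin.castLE hle1) Finset.univ := by
      ext x
      simp only [hT, Finset.mem_filter, Finset.mem_univ, true_and, Finset.mem_image]
      constructor
      · intro hx
        exact ⟨⟨x.val, by omega⟩, Fin.ext rfl⟩
      · rintro ⟨a, rfl⟩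
        have := a.isLt
        simp only [Fin.coe_castLE]
        omega
    rw [this, Finset.card_image_of_injective _ (Fin.castLE_injective hle1)]
    simp
  have h2 : 1 < (T \ S).card := by
    have := Finset.le_card_sdiff S T
    omega
  obtain ⟨a, ha, b, hb, hab⟩ := Finset.one_lt_card.mp h2
  have haT : a.val ≤ n - d := by
    have := (Finset.mem_sdiff.mp ha).1
    simpa [hT] using this
  have hbT : b.val ≤ n - d := by
    have := (Finset.mem_sdiff.mp hb).1
    simpa [hT] using this
  have haS : a ∉ S := (Finset.mem_sdiff.mp ha).2
  have hbS : b ∉ S := (Finset.mem_sdiff.mp hb).2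
  set σ : Fin n ≃ Fin n := Equiv.swap a b with hσ
  have hfix : ∀ x : Fin n, ¬ x.val ≤ n - d → σ x = x := by
    intro x hx
    exact Equiv.swap_apply_of_ne_of_ne (fun h => hx (h ▸ haT)) (fun h => hx (h ▸ hbT))
  have hval : ∀ x : Fin n, (σ x).val ≤ n - d ↔ x.val ≤ n - d := by
    intro x
    by_cases h : x.val ≤ n - d
    · simp only [hσ, Equiv.swap_apply_def]
      split_ifs <;> simp [h, haT, hbT]
    · rw [hfix x h]
  have hauto : IsDigraphAuto (egArc n d) σ := by
    have hdir : ∀ τ : Fin n ≃ Fin n,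
        (∀ x : Fin n, ¬ x.val ≤ n - d → τ x = x) →
        (∀ x : Fin n, (τ x).val ≤ n - d ↔ x.val ≤ n - d) →
        ∀ p q : Fin n, egArc n d p q → egArc n d (τ p) (τ q) := by
      intro τ hfix' hval' p q hpq
      have hp := p.isLt
      have hq := q.isLt
      rcases hpq with ⟨h1, h2⟩ | ⟨h1, h2⟩ | ⟨h1, h2, h3⟩
      · have ep : τ p = p := hfix' p (by omega)
        exact Or.inl ⟨by rw [ep]; exact h1, (hval' q).mpr h2⟩
      · have eq' : τ q = q := hfix' q (by omega)
        exact Or.inr (Or.inl ⟨(hval' p).mpr h1, by rw [eq']; exact h2⟩)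
      · have ep : τ p = p := hfix' p (by omega)
        have eq' : τ q = q := hfix' q (by omega)
        exact Or.inr (Or.inr ⟨by rw [ep]; exact h1, by rw [ep]; exact h2,
          by rw [ep, eq']; exact h3⟩)
    intro p q
    constructor
    · exact hdir σ hfix hval p q
    · intro h
      have hfix2 : ∀ x : Fin n, ¬ x.val ≤ n - d → σ.symm x = x := by
        intro x hx
        simp only [hσ, Equiv.symm_swap]
        exact hfix x hx
      have hval2 : ∀ x : Fin n, (σ.symm x).val ≤ n - d ↔ x.val ≤ n - d := by
        intro x
        have := hval (σ.symm x)
        simp only [Equiv.apply_symm_apply] at this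
        exact this.symm
      have := hdir σ.symm hfix2 hval2 _ _ h
      simpa using this
  have hcontra : ∀ w ∈ S, twoDist (egArc n d) w a = twoDist (egArc n d) w b := by
    intro w hw
    have hwfix : σ w = w :=
      Equiv.swap_apply_of_ne_of_ne (fun h => haS (h ▸ hw)) (fun h => hbS (h ▸ hw))
    have hσa : σ a = b := Equiv.swap_apply_left a b
    calc twoDist (egArc n d) w a = twoDist (egArc n d) (σ w) (σ a) :=
          (myTwoDist_auto hauto w a).symm
      _ = twoDist (egArc n d) w b := by rw [hwfix, hσa]
  exact hab (hres a b (fun w hw => hcontra w hw))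

theorem egWdim (n d : ℕ) (hd : 2 ≤ d) (hn : d + 1 ≤ n) :
    wdim (egArc n d) = n - d := by
  obtain ⟨S, hScard, hSres⟩ := egWdimUB n d hd hn
  have hmem : n - d ∈ {k | ∃ S : Finset (Fin n), S.card = k ∧
      IsWeaklyResolving (egArc n d) ↑S} := ⟨S, hScard, hSres⟩
  unfold wdim
  refine le_antisymm (Nat.sInf_le hmem) ?_
  apply le_csInf ⟨_, hmem⟩
  rintro k ⟨S', hS'card, hS'res⟩
  exact egWdimLB n d hd hn k S' hS'card hS'res

/-- Example 2.3. The digraph `egArc n d` is strongly connected,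
has `n` vertices, diameter `d`, and weak metric dimension `n - d`. -/
theorem egArc_properties (n d : ℕ) (hd : 2 ≤ d) (hn : d + 1 ≤ n) :
    IsStronglyConnected (egArc n d) ∧ Fintype.card (Fin n) = n ∧
    diam (egArc n d) = d ∧ wdim (egArc n d) = n - d := by
  exact ⟨egSC n d hd hn, Fintype.card_fin n, egDiam n d hd hn, egWdim n d hd hn⟩
end

section
/- For positive integers n and d with d+1 ≤ n ≤ d² + 1 and d ≥ 2, the digraph Γ(n,d) is strongly connected with diameter d, and dim(Γ(n,d)) = 1 = f(n,d). -/
namespace GammaAux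

lemma walkLen_trans {V : Type*} {A : V → V → Prop} {s t : ℕ} {x y z : V}
    (h1 : walkLen A s x y) (h2 : walkLen A t y z) : walkLen A (s + t) x z := by
  induction s generalizing x with
  | zero =>
    have hxy : x = y := h1
    have e : 0 + t = t := by omega
    rw [e, hxy]; exact h2
  | succ n ih =>
    obtain ⟨w, hw, hwalk⟩ := h1
    have e : n + 1 + t = (n + t) + 1 := by omega
    rw [e]
    exact ⟨w, hw, ih hwalk⟩

lemma ddist_self {V : Type*} (A : V → V → Prop) (x : V) : ddist A x x = 0 :=
  Nat.sInf_eq_zero.mpr (Or.inl (show walkLen A 0 x x from rfl))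

section Gamma

variable {d m : ℕ}

lemma modd (hd : 0 < d) {a b : ℕ} (ha : a < d) : (a + b * d) % d = a := by
  rw [Nat.add_mul_mod_self_right, Nat.mod_eq_of_lt ha]

lemma divd (hd : 0 < d) {a b : ℕ} (ha : a < d) : (a + b * d) / d = b := by
  rw [Nat.add_mul_div_right _ _ hd, Nat.div_eq_of_lt ha, Nat.zero_add]

lemma jdiv (hd : 0 < d) (hmd : m ≤ d ^ 2) (j : Fin m) : j.val / d < d := by
  apply Nat.div_lt_of_lt_mul
  have := j.isLt
  have : j.val < d ^ 2 := by omega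
  nlinarith [sq_nonneg d]

lemma arc_ul (i : Fin 1) (j : Fin m) :
    gammaArcKM d 1 (m := m) (.inl i) (.inr j) ↔ j.val % d = 0 := by
  have hi : i.val = 0 := by omega
  show gcoord d j.val (2 * i.val) = 1 ↔ _
  rw [hi]
  simp only [gcoord, Nat.mul_zero, pow_zero, Nat.div_one]
  omega

lemma arc_lu (hd : 0 < d) (hmd : m ≤ d ^ 2) (i : Fin 1) (j : Fin m) :
    gammaArcKM d 1 (m := m) (.inr j) (.inl i) ↔ j.val / d = 0 := by
  have hi : i.val = 0 := by omega
  show gcoord d j.val (2 * i.val + 1) = 1 ↔ _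
  rw [hi]
  simp only [gcoord, Nat.mul_zero, Nat.zero_add, pow_one]
  have := jdiv hd hmd j
  rw [Nat.mod_eq_of_lt this]
  omega

lemma arc_vv (hd : 0 < d) (hmd : m ≤ d ^ 2) (j l : Fin m) :
    gammaArcKM d 1 (m := m) (.inr j) (.inr l) ↔
      (j ≠ l ∧ l.val % d ≤ j.val % d + 1 ∧ j.val / d ≤ l.val / d + 1) := by
  have hj := jdiv hd hmd j
  have hl := jdiv hd hmd l
  show (j ≠ l ∧ ∀ r < 1, _ ∧ _) ↔ _
  constructor
  · rintro ⟨hne, h⟩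
    obtain ⟨h1, h2⟩ := h 0 Nat.zero_lt_one
    simp only [gcoord, Nat.mul_zero, pow_zero, Nat.div_one, Nat.zero_add, pow_one] at h1 h2
    rw [Nat.mod_eq_of_lt hj, Nat.mod_eq_of_lt hl] at h2
    exact ⟨hne, by omega, by omega⟩
  · rintro ⟨hne, h1, h2⟩
    refine ⟨hne, fun r hr => ?_⟩
    have hr0 : r = 0 := by omega
    subst hr0
    simp only [gcoord, Nat.mul_zero, pow_zero, Nat.div_one, Nat.zero_add, pow_one]
    rw [Nat.mod_eq_of_lt hj, Nat.mod_eq_of_lt hl]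
    omega

/-- potential tracking the first coordinate -/
def av (d : ℕ) {m : ℕ} : Fin 1 ⊕ Fin m → ℕ
  | .inl _ => 0
  | .inr j => j.val % d + 1

/-- potential tracking the second coordinate -/
def bv (d : ℕ) {m : ℕ} : Fin 1 ⊕ Fin m → ℕ
  | .inl _ => 0
  | .inr j => j.val / d + 1

lemma arc_av (hd : 0 < d) (hmd : m ≤ d ^ 2) {x y : Fin 1 ⊕ Fin m}
    (h : gammaArcKM d 1 x y) : av d y ≤ av d x + 1 := by
  cases x with
  | inl i =>
    cases y with
    | inl i' => exact absurd h (by simp [gammaArcKM])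
    | inr l =>
      rw [arc_ul] at h
      simp only [av]
      omega
  | inr j =>
    cases y with
    | inl i' => simp [av]
    | inr l =>
      rw [arc_vv hd hmd] at h
      simp only [av]
      omega

lemma arc_bv (hd : 0 < d) (hmd : m ≤ d ^ 2) {x y : Fin 1 ⊕ Fin m}
    (h : gammaArcKM d 1 x y) : bv d x ≤ bv d y + 1 := by
  cases x with
  | inl i =>
    cases y with
    | inl i' => exact absurd h (by simp [gammaArcKM])
    | inr l => simp [bv]
  | inr j =>
    cases y with
    | inl i' =>
      rw [arc_lu hd hmd] at h
      simp only [bv, h]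
      omega
    | inr l =>
      rw [arc_vv hd hmd] at h
      simp only [bv]
      omega

lemma walk_av (hd : 0 < d) (hmd : m ≤ d ^ 2) :
    ∀ {t : ℕ} {x y : Fin 1 ⊕ Fin m}, walkLen (gammaArcKM d 1) t x y → av d y ≤ av d x + t := by
  intro t
  induction t with
  | zero => intro x y h; rw [show y = x from (h : x = y).symm]; omega
  | succ s ih =>
    rintro x y ⟨z, hxz, hw⟩
    have := ih hw
    have := arc_av hd hmd hxz
    omega

lemma walk_bv (hd : 0 < d) (hmd : m ≤ d ^ 2) :
    ∀ {t : ℕ} {x y : Fin 1 ⊕ Fin m}, walkLen (gammaArcKM d 1) t x y → bv d x ≤ bv d y + t := by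
  intro t
  induction t with
  | zero => intro x y h; rw [show y = x from (h : x = y).symm]; omega
  | succ s ih =>
    rintro x y ⟨z, hxz, hw⟩
    have := ih hw
    have := arc_bv hd hmd hxz
    omega

lemma walk_u_to (hd : 0 < d) (hmd : m ≤ d ^ 2) :
    ∀ (a b : ℕ) (h : a + b * d < m) (_ : a < d),
      walkLen (gammaArcKM d 1 (m := m)) (a + 1) (.inl 0) (.inr ⟨a + b * d, h⟩) := by
  intro a
  induction a with
  | zero =>
    intro b h ha
    refine ⟨.inr ⟨0 + b * d, h⟩, ?_, rfl⟩
    rw [arc_ul]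
    exact modd hd ha
  | succ a ih =>
    intro b h ha
    have h' : a + b * d < m := by omega
    have hw := ih b h' (by omega)
    have harc : gammaArcKM d 1 (m := m) (.inr ⟨a + b * d, h'⟩) (.inr ⟨a + 1 + b * d, h⟩) := by
      rw [arc_vv hd hmd]
      refine ⟨?_, ?_, ?_⟩
      · intro he
        have : a + b * d = a + 1 + b * d := congrArg Fin.val he
        omega
      · rw [modd hd (by omega : a < d), modd hd ha]
      · rw [divd hd (by omega : a < d), divd hd ha]
        omega
    exact walkLen_trans hw ⟨_, harc, rfl⟩

lemma walk_to_u (hd : 0 < d) (hmd : m ≤ d ^ 2) :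
    ∀ (b a : ℕ) (h : a + b * d < m) (_ : a < d),
      walkLen (gammaArcKM d 1 (m := m)) (b + 1) (.inr ⟨a + b * d, h⟩) (.inl 0) := by
  intro b
  induction b with
  | zero =>
    intro a h ha
    refine ⟨.inl 0, ?_, rfl⟩
    rw [arc_lu hd hmd]
    exact divd hd ha
  | succ b ih =>
    intro a h ha
    have hmul : (b + 1) * d = b * d + d := Nat.succ_mul b d
    have h' : 0 + b * d < m := by omega
    refine ⟨.inr ⟨0 + b * d, h'⟩, ?_, ih 0 h' hd⟩
    rw [arc_vv hd hmd]
    refine ⟨?_, ?_, ?_⟩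
    · intro he
      have : a + (b + 1) * d = 0 + b * d := congrArg Fin.val he
      omega
    · rw [modd hd ha, modd hd hd]
      omega
    · rw [divd hd ha, divd hd hd]

lemma rep_inj (hd : 0 < d) {a b a' b' : ℕ} (ha : a < d) (ha' : a' < d)
    (h : a + b * d = a' + b' * d) : a = a' ∧ b = b' := by
  constructor
  · calc a = (a + b * d) % d := (modd hd ha).symm
      _ = (a' + b' * d) % d := by rw [h]
      _ = a' := modd hd ha'
  · calc b = (a + b * d) / d := (divd hd ha).symm
      _ = (a' + b' * d) / d := by rw [h]
      _ = b' := divd hd ha'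

lemma arc_rep (hd : 0 < d) (hmd : m ≤ d ^ 2) {aj bj al bl : ℕ} (hja : aj < d) (hla : al < d)
    (hjlt : aj + bj * d < m) (hllt : al + bl * d < m)
    (hne : ¬(aj = al ∧ bj = bl)) (h1 : al ≤ aj + 1) (h2 : bj ≤ bl + 1) :
    gammaArcKM d 1 (m := m) (.inr ⟨aj + bj * d, hjlt⟩) (.inr ⟨al + bl * d, hllt⟩) := by
  rw [arc_vv hd hmd]
  refine ⟨?_, ?_, ?_⟩
  · intro he
    exact hne (rep_inj hd hja hla (congrArg Fin.val he))
  · show (al + bl * d) % d ≤ (aj + bj * d) % d + 1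
    rw [modd hd hla, modd hd hja]; exact h1
  · show (aj + bj * d) / d ≤ (al + bl * d) / d + 1
    rw [divd hd hja, divd hd hla]; exact h2

lemma walk_vv (hd : 0 < d) (hmd : m ≤ d ^ 2) :
    ∀ (t aj bj al bl : ℕ), aj < d → al < d →
      ∀ (hjlt : aj + bj * d < m) (hllt : al + bl * d < m),
      ¬(aj = al ∧ bj = bl) →
      t = max (max (al - aj) (bj - bl)) 1 →
      walkLen (gammaArcKM d 1 (m := m)) t (.inr ⟨aj + bj * d, hjlt⟩) (.inr ⟨al + bl * d, hllt⟩) := by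
  intro t
  induction t with
  | zero => intro aj bj al bl _ _ _ _ _ ht; omega
  | succ t ih =>
    intro aj bj al bl hja hla hjlt hllt hne ht
    rcases Nat.eq_zero_or_pos t with h0 | hpos
    · subst h0
      exact ⟨_, arc_rep hd hmd hja hla hjlt hllt hne (by omega) (by omega), rfl⟩
    · obtain ⟨az, haz1, haz2, haz3⟩ : ∃ a, a ≤ aj + 1 ∧ a ≤ al ∧ (a = aj + 1 ∨ a = al) :=
        ⟨min (aj + 1) al, min_le_left _ _, min_le_right _ _, min_choice _ _⟩
      obtain ⟨bz, hbz1, hbz2, hbz3⟩ : ∃ b, bj - 1 ≤ b ∧ bl ≤ b ∧ (b = bj - 1 ∨ b = bl) :=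
        ⟨max (bj - 1) bl, le_max_left _ _, le_max_right _ _, max_choice _ _⟩
      have hazd : az < d := by omega
      have hzlt : az + bz * d < m := by
        rcases eq_or_ne bz bl with hc | hc
        · calc az + bz * d ≤ al + bl * d := by
                rw [hc]; exact Nat.add_le_add_right haz2 _
            _ < m := hllt
        · have hbzj : bz = bj - 1 := by tauto
          have hb0 : 0 < bz := lt_of_le_of_lt (Nat.zero_le bl) (lt_of_le_of_ne hbz2 (Ne.symm hc))
          have he2 : bz + 1 = bj := by omega
          have e : bz * d + d = bj * d := by
            rw [← Nat.succ_mul]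
            exact congrArg (· * d) he2
          calc az + bz * d < d + bz * d := Nat.add_lt_add_right hazd _
            _ = bz * d + d := Nat.add_comm _ _
            _ = bj * d := e
            _ ≤ aj + bj * d := Nat.le_add_left _ _
            _ < m := hjlt
      refine ⟨.inr ⟨az + bz * d, hzlt⟩,
        arc_rep hd hmd hja hazd hjlt hzlt ?_ (by omega) (by omega),
        ih az bz al bl hazd hla hzlt hllt ?_ (by omega)⟩
      · rintro ⟨e1, e2⟩; omega
      · rintro ⟨e1, e2⟩; omega

lemma walk_vv' (hd : 0 < d) (hmd : m ≤ d ^ 2) (j l : Fin m) (hne : j ≠ l) :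
    walkLen (gammaArcKM d 1 (m := m))
      (max (max (l.val % d - j.val % d) (j.val / d - l.val / d)) 1) (.inr j) (.inr l) := by
  have hja : j.val % d < d := Nat.mod_lt _ hd
  have hla : l.val % d < d := Nat.mod_lt _ hd
  have hjlt : j.val % d + j.val / d * d < m := by rw [Nat.mod_add_div']; exact j.isLt
  have hllt : l.val % d + l.val / d * d < m := by rw [Nat.mod_add_div']; exact l.isLt
  have hne' : ¬(j.val % d = l.val % d ∧ j.val / d = l.val / d) := by
    rintro ⟨e1, e2⟩
    apply hne
    apply Fin.ext
    rw [← Nat.mod_add_div' j.val d, ← Nat.mod_add_div' l.val d, e1, e2]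
  have hw := walk_vv hd hmd _ _ _ _ _ hja hla hjlt hllt hne' rfl
  have hej : (⟨j.val % d + j.val / d * d, hjlt⟩ : Fin m) = j := Fin.ext (Nat.mod_add_div' j.val d)
  have hel : (⟨l.val % d + l.val / d * d, hllt⟩ : Fin m) = l := Fin.ext (Nat.mod_add_div' l.val d)
  rw [hej, hel] at hw
  exact hw

lemma ddist_u_v (hd : 0 < d) (hmd : m ≤ d ^ 2) (l : Fin m) :
    ddist (gammaArcKM d 1 (m := m)) (.inl 0) (.inr l) = l.val % d + 1 := by
  have hlt : l.val % d + l.val / d * d < m := by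
    rw [Nat.mod_add_div']; exact l.isLt
  have hw := walk_u_to hd hmd (l.val % d) (l.val / d) hlt (Nat.mod_lt _ hd)
  have he : (⟨l.val % d + l.val / d * d, hlt⟩ : Fin m) = l := Fin.ext (Nat.mod_add_div' l.val d)
  rw [he] at hw
  have hwm : l.val % d + 1 ∈ {n | walkLen (gammaArcKM d 1 (m := m)) n (Sum.inl 0) (Sum.inr l)} := hw
  refine le_antisymm (Nat.sInf_le hwm) (le_csInf ⟨_, hwm⟩ ?_)
  intro t htw
  have := walk_av hd hmd htw
  simpa [av] using this

lemma ddist_v_u (hd : 0 < d) (hmd : m ≤ d ^ 2) (j : Fin m) :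
    ddist (gammaArcKM d 1 (m := m)) (.inr j) (.inl 0) = j.val / d + 1 := by
  have hlt : j.val % d + j.val / d * d < m := by
    rw [Nat.mod_add_div']; exact j.isLt
  have hw := walk_to_u hd hmd (j.val / d) (j.val % d) hlt (Nat.mod_lt _ hd)
  have he : (⟨j.val % d + j.val / d * d, hlt⟩ : Fin m) = j := Fin.ext (Nat.mod_add_div' j.val d)
  rw [he] at hw
  have hwm : j.val / d + 1 ∈ {n | walkLen (gammaArcKM d 1 (m := m)) n (Sum.inr j) (Sum.inl 0)} := hw
  refine le_antisymm (Nat.sInf_le hwm) (le_csInf ⟨_, hwm⟩ ?_)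
  intro t htw
  have := walk_bv hd hmd htw
  simpa [bv] using this

lemma ddist_v_v_le (hd : 2 ≤ d) (hmd : m ≤ d ^ 2) (j l : Fin m) (hne : j ≠ l) :
    ddist (gammaArcKM d 1 (m := m)) (.inr j) (.inr l) ≤ d - 1 := by
  have hd0 : 0 < d := by omega
  have hw := walk_vv' hd0 hmd j l hne
  refine le_trans (Nat.sInf_le hw) (max_le (max_le ?_ ?_) ?_)
  · exact le_trans (Nat.sub_le _ _) (Nat.le_pred_of_lt (Nat.mod_lt _ hd0))
  · exact le_trans (Nat.sub_le _ _) (Nat.le_pred_of_lt (jdiv hd0 hmd j))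
  · omega

lemma gamma_sc (hd : 2 ≤ d) (hdm : d ≤ m) (hmd : m ≤ d ^ 2) :
    IsStronglyConnected (gammaArcKM d 1 (m := m)) := by
  have hd0 : 0 < d := by omega
  intro x y
  cases x with
  | inl i =>
    have hi : i = 0 := Subsingleton.elim _ _
    subst hi
    cases y with
    | inl i' =>
      have : i' = 0 := Subsingleton.elim _ _
      subst this
      exact ⟨0, rfl⟩
    | inr l =>
      have hlt : l.val % d + l.val / d * d < m := by rw [Nat.mod_add_div']; exact l.isLt
      have hw := walk_u_to hd0 hmd (l.val % d) (l.val / d) hlt (Nat.mod_lt _ hd0)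
      have he : (⟨l.val % d + l.val / d * d, hlt⟩ : Fin m) = l := Fin.ext (Nat.mod_add_div' l.val d)
      rw [he] at hw
      exact ⟨_, hw⟩
  | inr j =>
    cases y with
    | inl i' =>
      have : i' = 0 := Subsingleton.elim _ _
      subst this
      have hlt : j.val % d + j.val / d * d < m := by rw [Nat.mod_add_div']; exact j.isLt
      have hw := walk_to_u hd0 hmd (j.val / d) (j.val % d) hlt (Nat.mod_lt _ hd0)
      have he : (⟨j.val % d + j.val / d * d, hlt⟩ : Fin m) = j := Fin.ext (Nat.mod_add_div' j.val d)
      rw [he] at hw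
      exact ⟨_, hw⟩
    | inr l =>
      rcases eq_or_ne j l with rfl | hne
      · exact ⟨0, rfl⟩
      · exact ⟨_, walk_vv' hd0 hmd j l hne⟩

lemma ddist_le_d (hd : 2 ≤ d) (hdm : d ≤ m) (hmd : m ≤ d ^ 2) (x y : Fin 1 ⊕ Fin m) :
    ddist (gammaArcKM d 1 (m := m)) x y ≤ d := by
  have hd0 : 0 < d := by omega
  cases x with
  | inl i =>
    have hi : i = 0 := Subsingleton.elim _ _
    subst hi
    cases y with
    | inl i' =>
      have : i' = 0 := Subsingleton.elim _ _
      subst this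
      rw [ddist_self]; omega
    | inr l =>
      rw [ddist_u_v hd0 hmd]
      have : l.val % d < d := Nat.mod_lt _ hd0
      omega
  | inr j =>
    cases y with
    | inl i' =>
      have : i' = 0 := Subsingleton.elim _ _
      subst this
      rw [ddist_v_u hd0 hmd]
      have := jdiv hd0 hmd j
      omega
    | inr l =>
      rcases eq_or_ne j l with rfl | hne
      · rw [ddist_self]; omega
      · have := ddist_v_v_le hd hmd j l hne
        omega

lemma gamma_diam (hd : 2 ≤ d) (hdm : d ≤ m) (hmd : m ≤ d ^ 2) :
    diam (gammaArcKM d 1 (m := m)) = d := by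
  have hd0 : 0 < d := by omega
  have hbdd : ∀ s ∈ {s | ∃ x y : Fin 1 ⊕ Fin m, ddist (gammaArcKM d 1) x y = s}, s ≤ d := by
    rintro s ⟨x, y, rfl⟩
    exact ddist_le_d hd hdm hmd x y
  have hvert : d - 1 < m := by omega
  have hmem : d ∈ {s | ∃ x y : Fin 1 ⊕ Fin m, ddist (gammaArcKM d 1) x y = s} := by
    refine ⟨.inl 0, .inr ⟨d - 1, hvert⟩, ?_⟩
    rw [ddist_u_v hd0 hmd]
    simp only
    rw [Nat.mod_eq_of_lt (by omega : d - 1 < d)]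
    omega
  exact le_antisymm (csSup_le ⟨d, hmem⟩ hbdd) (le_csSup ⟨d, hbdd⟩ hmem)

lemma gamma_wdim (hd : 2 ≤ d) (hdm : d ≤ m) (hmd : m ≤ d ^ 2) :
    wdim (gammaArcKM d 1 (m := m)) = 1 := by
  have hd0 : 0 < d := by omega
  have hm0 : 0 < m := by omega
  have hres : IsWeaklyResolving (gammaArcKM d 1 (m := m)) ↑({Sum.inl 0} : Finset (Fin 1 ⊕ Fin m)) := by
    intro u v h
    have hu := h (.inl 0) (by simp)
    unfold twoDist at hu
    cases u with
    | inl i =>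
      cases v with
      | inl i' => rw [Subsingleton.elim i i']
      | inr l =>
        exfalso
        have h1 : ddist (gammaArcKM d 1) (Sum.inl 0) (Sum.inl i) =
            ddist (gammaArcKM d 1) (Sum.inl 0) (Sum.inr l) := congrArg Prod.fst hu
        rw [Subsingleton.elim i 0, ddist_self, ddist_u_v hd0 hmd] at h1
        omega
    | inr j =>
      cases v with
      | inl i' =>
        exfalso
        have h1 : ddist (gammaArcKM d 1) (Sum.inl 0) (Sum.inr j) =
            ddist (gammaArcKM d 1) (Sum.inl 0) (Sum.inl i') := congrArg Prod.fst hu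
        rw [Subsingleton.elim i' 0, ddist_self, ddist_u_v hd0 hmd] at h1
        omega
      | inr l =>
        have h1 : ddist (gammaArcKM d 1) (Sum.inl 0) (Sum.inr j) =
            ddist (gammaArcKM d 1) (Sum.inl 0) (Sum.inr l) := congrArg Prod.fst hu
        have h2 : ddist (gammaArcKM d 1) (Sum.inr j) (Sum.inl 0) =
            ddist (gammaArcKM d 1) (Sum.inr l) (Sum.inl 0) := congrArg Prod.snd hu
        rw [ddist_u_v hd0 hmd, ddist_u_v hd0 hmd] at h1
        rw [ddist_v_u hd0 hmd, ddist_v_u hd0 hmd] at h2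
        have e1 : j.val % d = l.val % d := by omega
        have e2 : j.val / d = l.val / d := by omega
        have : j.val = l.val := by
          rw [← Nat.mod_add_div' j.val d, ← Nat.mod_add_div' l.val d, e1, e2]
        exact congrArg Sum.inr (Fin.ext this)
  have hmem1 : 1 ∈ {k | ∃ S : Finset (Fin 1 ⊕ Fin m), S.card = k ∧
      IsWeaklyResolving (gammaArcKM d 1 (m := m)) ↑S} :=
    ⟨{Sum.inl 0}, Finset.card_singleton _, hres⟩
  have hpos : ∀ k ∈ {k | ∃ S : Finset (Fin 1 ⊕ Fin m), S.card = k ∧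
      IsWeaklyResolving (gammaArcKM d 1 (m := m)) ↑S}, 1 ≤ k := by
    rintro k ⟨S, rfl, hS⟩
    by_contra hk
    have hS0 : S = ∅ := Finset.card_eq_zero.mp (by omega)
    subst hS0
    have := hS (Sum.inl 0) (Sum.inr ⟨0, hm0⟩) (by simp)
    exact Sum.inl_ne_inr this
  unfold wdim
  exact le_antisymm (Nat.sInf_le hmem1) (hpos _ (Nat.sInf_mem ⟨1, hmem1⟩))

end Gamma

end GammaAux

/-- Lemma 2.5(i). For `d + 1 ≤ n ≤ d² + 1` and `d ≥ 2`, the digraph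
`Γ(n,d)` is strongly connected with diameter `d` and `dim(Γ(n,d)) = 1 = f(n,d)`. -/
theorem gamma_nd_dim_one (n d : ℕ) (hd : 2 ≤ d) (h1 : d + 1 ≤ n) (h2 : n ≤ d ^ 2 + 1) :
    IsStronglyConnected (gammaArcKM d (fnd n d) (m := n - fnd n d)) ∧
    diam (gammaArcKM d (fnd n d) (m := n - fnd n d)) = d ∧
    wdim (gammaArcKM d (fnd n d) (m := n - fnd n d)) = 1 ∧ fnd n d = 1 := by
  have hd0 : 0 < d := by omega
  have hmem1 : 1 ∈ {k | 0 < k ∧ n ≤ k + d ^ (2 * k)} := by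
    constructor
    · omega
    · have : d ^ (2 * 1) = d ^ 2 := by norm_num
      rw [this]; omega
  have hf : fnd n d = 1 := by
    unfold fnd
    exact le_antisymm (Nat.sInf_le hmem1) (Nat.sInf_mem ⟨1, hmem1⟩).1
  rw [hf]
  have hdm : d ≤ n - 1 := by omega
  have hmd : n - 1 ≤ d ^ 2 := by omega
  exact ⟨GammaAux.gamma_sc hd hdm hmd, GammaAux.gamma_diam hd hdm hmd,
    GammaAux.gamma_wdim hd hdm hmd, rfl⟩
end

section
/- For every integer n ≥ 4, the digraph Γ(n,3) is strongly connected with diameter 3, and dim(Γ(n,3)) = f(n,3). -/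
namespace Gamma3Aux

/-- base-3 digit -/
def dg (j r : ℕ) : ℕ := j / 3 ^ r % 3

lemma dg_lt (j r : ℕ) : dg j r < 3 := Nat.mod_lt _ (by norm_num)

lemma dg_zero (r : ℕ) : dg 0 r = 0 := by simp [dg]

lemma dg_zero' (j : ℕ) : dg j 0 = j % 3 := by simp [dg]

lemma dg_succ (j r : ℕ) : dg j (r + 1) = dg (j / 3) r := by
  unfold dg
  rw [Nat.div_div_eq_div_mul, show (3:ℕ) * 3 ^ r = 3 ^ (r+1) by ring]

lemma sum_dg : ∀ (t j : ℕ), j < 3 ^ t → ∑ r ∈ Finset.range t, dg j r * 3 ^ r = j := by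
  intro t
  induction t with
  | zero => intro j hj; interval_cases j; simp
  | succ t ih =>
    intro j hj
    have h3 : j / 3 < 3 ^ t := by
      rw [Nat.div_lt_iff_lt_mul (by norm_num)]
      calc j < 3 ^ (t+1) := hj
        _ = 3 ^ t * 3 := by ring
    rw [Finset.sum_range_succ']
    have h4 : ∑ r ∈ Finset.range t, dg j (r+1) * 3 ^ (r+1)
        = (∑ r ∈ Finset.range t, dg (j/3) r * 3 ^ r) * 3 := by
      rw [Finset.sum_mul]
      exact Finset.sum_congr rfl fun r _ => by rw [dg_succ]; ring
    rw [h4, ih (j/3) h3, dg_zero', pow_zero]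
    omega

lemma sum_build_lt (t : ℕ) (f : ℕ → ℕ) (hf : ∀ r, f r < 3) :
    ∑ r ∈ Finset.range t, f r * 3 ^ r < 3 ^ t := by
  induction t with
  | zero => simp
  | succ t ih =>
    rw [Finset.sum_range_succ, pow_succ]
    have h1 : f t * 3 ^ t ≤ 2 * 3 ^ t := Nat.mul_le_mul_right _ (by have := hf t; omega)
    omega

lemma dg_sum : ∀ (t : ℕ) (f : ℕ → ℕ), (∀ r, f r < 3) → ∀ p : ℕ,
    dg (∑ r ∈ Finset.range t, f r * 3 ^ r) p = if p < t then f p else 0 := by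
  intro t
  induction t with
  | zero => intro f hf p; simp [dg_zero]
  | succ t ih =>
    intro f hf p
    have hN : ∑ r ∈ Finset.range (t+1), f r * 3 ^ r
        = f 0 + 3 * ∑ r ∈ Finset.range t, f (r+1) * 3 ^ r := by
      rw [Finset.sum_range_succ', Finset.mul_sum, pow_zero]
      have : ∀ r, f (r+1) * 3 ^ (r+1) = 3 * (f (r+1) * 3 ^ r) := fun r => by ring
      rw [Finset.sum_congr rfl fun r _ => this r]
      omega
    rw [hN]
    cases p with
    | zero =>
      rw [dg_zero']
      have : (f 0 + 3 * ∑ r ∈ Finset.range t, f (r+1) * 3 ^ r) % 3 = f 0 % 3 := by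
        omega
      rw [this, Nat.mod_eq_of_lt (hf 0)]
      simp
    | succ q =>
      rw [dg_succ]
      have hdiv : (f 0 + 3 * ∑ r ∈ Finset.range t, f (r+1) * 3 ^ r) / 3
          = ∑ r ∈ Finset.range t, f (r+1) * 3 ^ r := by
        have := hf 0; omega
      rw [hdiv, ih (fun r => f (r+1)) (fun r => hf (r+1)) q]
      have : q + 1 < t + 1 ↔ q < t := by omega
      split_ifs with h1 h2 h2 <;> first | rfl | omega

lemma eq_of_dg_eq {t j l : ℕ} (hj : j < 3 ^ t) (hl : l < 3 ^ t)
    (h : ∀ p < t, dg j p = dg l p) : j = l := by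
  rw [← sum_dg t j hj, ← sum_dg t l hl]
  exact Finset.sum_congr rfl fun r hr => by rw [h r (Finset.mem_range.mp hr)]

lemma eq_zero_of_dg {t j : ℕ} (hj : j < 3 ^ t) (h : ∀ p < t, dg j p = 0) : j = 0 := by
  rw [← sum_dg t j hj]
  exact Finset.sum_eq_zero fun r hr => by rw [h r (Finset.mem_range.mp hr), zero_mul]

/-- the minimal vertex that can enter `l`. -/
def wE (k l : ℕ) : ℕ := ∑ r ∈ Finset.range (2*k), (if r % 2 = 0 then dg l r - 1 else 0) * 3 ^ r

/-- the minimal vertex that `j` can leave to. -/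
def wL (k j : ℕ) : ℕ := ∑ r ∈ Finset.range (2*k), (if r % 2 = 1 then dg j r - 1 else 0) * 3 ^ r

lemma wE_f_lt (l : ℕ) : ∀ r, (if r % 2 = 0 then dg l r - 1 else 0) < 3 :=
  fun r => by have := dg_lt l r; split <;> omega

lemma wL_f_lt (j : ℕ) : ∀ r, (if r % 2 = 1 then dg j r - 1 else 0) < 3 :=
  fun r => by have := dg_lt j r; split <;> omega

lemma dg_wE (k l p : ℕ) : dg (wE k l) p = if p < 2*k ∧ p % 2 = 0 then dg l p - 1 else 0 := by
  rw [wE, dg_sum _ _ (wE_f_lt l)]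
  split_ifs <;> omega

lemma dg_wL (k j p : ℕ) : dg (wL k j) p = if p < 2*k ∧ p % 2 = 1 then dg j p - 1 else 0 := by
  rw [wL, dg_sum _ _ (wL_f_lt j)]
  split_ifs <;> omega

lemma wE_lt (k l : ℕ) : wE k l < 3 ^ (2*k) := sum_build_lt _ _ (wE_f_lt l)
lemma wL_lt (k j : ℕ) : wL k j < 3 ^ (2*k) := sum_build_lt _ _ (wL_f_lt j)

lemma wE_le (k l : ℕ) (hl : l < 3 ^ (2*k)) : wE k l ≤ l := by
  conv_rhs => rw [← sum_dg (2*k) l hl]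
  exact Finset.sum_le_sum fun r _ => Nat.mul_le_mul_right _ (by split <;> omega)

lemma wL_le (k j : ℕ) (hj : j < 3 ^ (2*k)) : wL k j ≤ j := by
  conv_rhs => rw [← sum_dg (2*k) j hj]
  exact Finset.sum_le_sum fun r _ => Nat.mul_le_mul_right _ (by split <;> omega)

lemma wE_eq_self {k l : ℕ} (hl : l < 3 ^ (2*k)) (h : wE k l = l) : l = 0 := by
  apply eq_zero_of_dg hl
  intro p hp
  have h2 := dg_wE k l p
  rw [h] at h2
  split_ifs at h2 <;> omega

lemma wL_eq_self {k j : ℕ} (hj : j < 3 ^ (2*k)) (h : wL k j = j) : j = 0 := by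
  apply eq_zero_of_dg hj
  intro p hp
  have h2 := dg_wL k j p
  rw [h] at h2
  split_ifs at h2 <;> omega

lemma wL_eq_wE {k j l : ℕ} (h : wL k j = wE k l) : wL k j = 0 := by
  apply eq_zero_of_dg (wL_lt k j)
  intro p hp
  have h1 := dg_wL k j p
  have h2 := dg_wE k l p
  rw [h] at h1 ⊢
  split_ifs at h1 h2 <;> omega

lemma dg_wE_even {k l r : ℕ} (hr : r < k) : dg (wE k l) (2*r) = dg l (2*r) - 1 := by
  rw [dg_wE]; split_ifs <;> omega

lemma dg_wE_odd {k l r : ℕ} : dg (wE k l) (2*r+1) = 0 := by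
  rw [dg_wE]; split_ifs <;> omega

lemma dg_wL_odd {k j r : ℕ} (hr : r < k) : dg (wL k j) (2*r+1) = dg j (2*r+1) - 1 := by
  rw [dg_wL]; split_ifs <;> omega

lemma dg_wL_even {k j r : ℕ} : dg (wL k j) (2*r) = 0 := by
  rw [dg_wL]; split_ifs <;> omega

lemma wE_eq_zero {k l : ℕ} (h : wE k l = 0) {r : ℕ} (hr : r < k) : dg l (2*r) ≤ 1 := by
  have h2 := dg_wE k l (2*r)
  rw [h, dg_zero] at h2
  split_ifs at h2 <;> omega

lemma wL_eq_zero {k j : ℕ} (h : wL k j = 0) {r : ℕ} (hr : r < k) : dg j (2*r+1) ≤ 1 := by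
  have h2 := dg_wL k j (2*r+1)
  rw [h, dg_zero] at h2
  split_ifs at h2 <;> omega

-- walkLen helpers
section walks
variable {V : Type*} {A : V → V → Prop} {x y z z' : V}

lemma walkLen_zero_iff : walkLen A 0 x y ↔ x = y := Iff.rfl

lemma walkLen_succ_iff {n : ℕ} : walkLen A (n+1) x y ↔ ∃ z, A x z ∧ walkLen A n z y := Iff.rfl

lemma walk1 (h : A x y) : walkLen A 1 x y := ⟨y, h, rfl⟩

lemma walk2 (h1 : A x z) (h2 : A z y) : walkLen A 2 x y := ⟨z, h1, walk1 h2⟩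

lemma walk3 (h1 : A x z) (h2 : A z z') (h3 : A z' y) : walkLen A 3 x y := ⟨z, h1, walk2 h2 h3⟩

lemma ddist_le {n : ℕ} (h : walkLen A n x y) : ddist A x y ≤ n := Nat.sInf_le h

lemma ddist_self (x : V) : ddist A x x = 0 :=
  Nat.eq_zero_of_le_zero (Nat.sInf_le (rfl : walkLen A 0 x x))

lemma walkLen_ddist (h : ∃ n, walkLen A n x y) : walkLen A (ddist A x y) x y := Nat.sInf_mem h

lemma ddist_eq {n : ℕ} (h : walkLen A n x y) (h' : ∀ p < n, ¬ walkLen A p x y) :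
    ddist A x y = n := by
  have h1 : ddist A x y ≤ n := ddist_le h
  have h2 : walkLen A (ddist A x y) x y := walkLen_ddist ⟨n, h⟩
  rcases lt_or_eq_of_le h1 with h3 | h3
  · exact absurd h2 (h' _ h3)
  · exact h3

lemma ddist_pos (hxy : x ≠ y) (h : ∃ n, walkLen A n x y) : 1 ≤ ddist A x y := by
  rcases Nat.eq_zero_or_pos (ddist A x y) with h0 | h0
  · have h2 := walkLen_ddist h
    rw [h0] at h2
    exact absurd h2 hxy
  · exact h0

end walks

-- arc characterizations
section arcs
variable {k m : ℕ}

lemma arc_uu {i i' : Fin k} : ¬ gammaArcKM 3 k (m := m) (.inl i) (.inl i') := fun h => h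

lemma arc_uv {i : Fin k} {j : Fin m} :
    gammaArcKM 3 k (.inl i) (.inr j) ↔ dg j.val (2 * i.val) = 0 := by
  show gcoord 3 j.val (2 * i.val) = 1 ↔ _
  unfold gcoord
  show dg j.val (2*i.val) + 1 = 1 ↔ _
  omega

lemma arc_vu {j : Fin m} {i : Fin k} :
    gammaArcKM 3 k (.inr j) (.inl i) ↔ dg j.val (2 * i.val + 1) = 0 := by
  show gcoord 3 j.val (2 * i.val + 1) = 1 ↔ _
  unfold gcoord
  show dg j.val (2*i.val+1) + 1 = 1 ↔ _
  omega

lemma gcoord_eq (j r : ℕ) : gcoord 3 j r = dg j r + 1 := rfl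

lemma arc_vv {j l : Fin m} :
    gammaArcKM 3 k (.inr j) (.inr l) ↔ j ≠ l ∧ ∀ r < k,
      dg l.val (2*r) ≤ dg j.val (2*r) + 1 ∧ dg j.val (2*r+1) ≤ dg l.val (2*r+1) + 1 := by
  show (j ≠ l ∧ ∀ r < k, gcoord 3 l.val (2*r) ≤ gcoord 3 j.val (2*r) + 1 ∧
      gcoord 3 j.val (2*r+1) ≤ gcoord 3 l.val (2*r+1) + 1) ↔ _
  simp only [gcoord_eq]
  constructor <;> rintro ⟨h1, h2⟩ <;>
    exact ⟨h1, fun r hr => by have := h2 r hr; omega⟩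

end arcs
section main
variable {k m : ℕ}

lemma fin_ne_of_val {a b : Fin m} (h : a.val ≠ b.val) : a ≠ b := fun e => h (congrArg Fin.val e)

lemma walk_lu (hm9 : m ≤ 3^(2*k)) (i : Fin k) (j : Fin m) :
    walkLen (gammaArcKM 3 k) (dg j.val (2*i.val) + 1) (.inl i) (.inr j) := by
  have hm0 : 0 < m := j.pos
  have hj9 : j.val < 3^(2*k) := lt_of_lt_of_le j.isLt hm9
  set wb : Fin m := ⟨wE k j.val, lt_of_le_of_lt (wE_le k _ hj9) j.isLt⟩ with hwb
  have hwbj : dg j.val (2*i.val) ≠ 0 → wb ≠ j := by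
    intro hc he
    have : wE k j.val = j.val := congrArg Fin.val he
    have := wE_eq_self hj9 this
    rw [this, dg_zero] at hc
    exact hc rfl
  have harcwbj : dg j.val (2*i.val) ≠ 0 → gammaArcKM 3 k (.inr wb) (.inr j) := by
    intro hc
    refine arc_vv.mpr ⟨hwbj hc, fun r hr => ?_⟩
    show dg j.val (2*r) ≤ dg (wE k j.val) (2*r) + 1 ∧ dg (wE k j.val) (2*r+1) ≤ _ + 1
    rw [dg_wE_even hr, dg_wE_odd]
    omega
  have hc := dg_lt j.val (2*i.val)
  rcases show dg j.val (2*i.val) = 0 ∨ dg j.val (2*i.val) = 1 ∨ dg j.val (2*i.val) = 2 by omega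
    with h0 | h1 | h2
  · rw [h0]
    exact walk1 (arc_uv.mpr h0)
  · rw [h1]
    have a1 : gammaArcKM 3 k (.inl i) (.inr wb) := by
      apply arc_uv.mpr
      show dg (wE k j.val) (2*i.val) = 0
      rw [dg_wE_even i.isLt, h1]
    exact walk2 a1 (harcwbj (by omega))
  · rw [h2]
    set v0 : Fin m := ⟨0, hm0⟩ with hv0
    have a1 : gammaArcKM 3 k (.inl i) (.inr v0) := by
      apply arc_uv.mpr
      show dg 0 (2*i.val) = 0
      exact dg_zero _
    have hwb0 : wb ≠ v0 := by
      apply fin_ne_of_val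
      show wE k j.val ≠ 0
      intro h
      have := wE_eq_zero h i.isLt
      omega
    have a2 : gammaArcKM 3 k (.inr v0) (.inr wb) := by
      refine arc_vv.mpr ⟨Ne.symm hwb0, fun r hr => ?_⟩
      show dg (wE k j.val) (2*r) ≤ dg 0 (2*r) + 1 ∧ dg 0 (2*r+1) ≤ dg (wE k j.val) (2*r+1) + 1
      rw [dg_wE_even hr, dg_zero, dg_zero]
      have := dg_lt j.val (2*r)
      omega
    exact walk3 a1 a2 (harcwbj (by omega))

lemma ddist_lu (hm9 : m ≤ 3^(2*k)) (i : Fin k) (j : Fin m) :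
    ddist (gammaArcKM 3 k) (.inl i) (.inr j) = dg j.val (2*i.val) + 1 := by
  apply ddist_eq (walk_lu hm9 i j)
  intro p hp hw
  have hc := dg_lt j.val (2*i.val)
  have hp3 : p < 3 := by omega
  interval_cases p
  · exact Sum.inl_ne_inr (show (Sum.inl i : Fin k ⊕ Fin m) = Sum.inr j from hw)
  · obtain ⟨z, h1, h2⟩ := hw
    have h2' : z = Sum.inr j := h2
    subst h2'
    have := arc_uv.mp h1
    omega
  · obtain ⟨z, h1, z', h2, h3⟩ := hw
    have h3' : z' = Sum.inr j := h3
    subst h3'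
    cases z with
    | inl a => exact arc_uu h1
    | inr w =>
      have hw0 := arc_uv.mp h1
      have := ((arc_vv.mp h2).2 i.val i.isLt).1
      omega

lemma walk_ul (hm9 : m ≤ 3^(2*k)) (j : Fin m) (i : Fin k) :
    walkLen (gammaArcKM 3 k) (dg j.val (2*i.val+1) + 1) (.inr j) (.inl i) := by
  have hm0 : 0 < m := j.pos
  have hj9 : j.val < 3^(2*k) := lt_of_lt_of_le j.isLt hm9
  set wa : Fin m := ⟨wL k j.val, lt_of_le_of_lt (wL_le k _ hj9) j.isLt⟩ with hwa
  have hwaj : dg j.val (2*i.val+1) ≠ 0 → j ≠ wa := by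
    intro hc he
    have : wL k j.val = j.val := (congrArg Fin.val he).symm
    have := wL_eq_self hj9 this
    rw [this, dg_zero] at hc
    exact hc rfl
  have harcjwa : dg j.val (2*i.val+1) ≠ 0 → gammaArcKM 3 k (.inr j) (.inr wa) := by
    intro hc
    refine arc_vv.mpr ⟨hwaj hc, fun r hr => ?_⟩
    show dg (wL k j.val) (2*r) ≤ dg j.val (2*r) + 1 ∧ dg j.val (2*r+1) ≤ dg (wL k j.val) (2*r+1) + 1
    rw [dg_wL_even, dg_wL_odd hr]
    omega
  have hc := dg_lt j.val (2*i.val+1)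
  rcases show dg j.val (2*i.val+1) = 0 ∨ dg j.val (2*i.val+1) = 1 ∨ dg j.val (2*i.val+1) = 2 by omega
    with h0 | h1 | h2
  · rw [h0]
    exact walk1 (arc_vu.mpr h0)
  · rw [h1]
    have a2 : gammaArcKM 3 k (.inr wa) (.inl i) := by
      apply arc_vu.mpr
      show dg (wL k j.val) (2*i.val+1) = 0
      rw [dg_wL_odd i.isLt, h1]
    exact walk2 (harcjwa (by omega)) a2
  · rw [h2]
    set v0 : Fin m := ⟨0, hm0⟩ with hv0
    have hwa0 : wa ≠ v0 := by
      apply fin_ne_of_val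
      show wL k j.val ≠ 0
      intro h
      have := wL_eq_zero h i.isLt
      omega
    have a2 : gammaArcKM 3 k (.inr wa) (.inr v0) := by
      refine arc_vv.mpr ⟨hwa0, fun r hr => ?_⟩
      show dg 0 (2*r) ≤ dg (wL k j.val) (2*r) + 1 ∧ dg (wL k j.val) (2*r+1) ≤ dg 0 (2*r+1) + 1
      rw [dg_wL_odd hr, dg_zero, dg_zero]
      have := dg_lt j.val (2*r+1)
      omega
    have a3 : gammaArcKM 3 k (.inr v0) (.inl i) := by
      apply arc_vu.mpr
      show dg 0 (2*i.val+1) = 0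
      exact dg_zero _
    exact walk3 (harcjwa (by omega)) a2 a3

lemma ddist_ul (hm9 : m ≤ 3^(2*k)) (j : Fin m) (i : Fin k) :
    ddist (gammaArcKM 3 k) (.inr j) (.inl i) = dg j.val (2*i.val+1) + 1 := by
  apply ddist_eq (walk_ul hm9 j i)
  intro p hp hw
  have hc := dg_lt j.val (2*i.val+1)
  have hp3 : p < 3 := by omega
  interval_cases p
  · exact Sum.inr_ne_inl (show (Sum.inr j : Fin k ⊕ Fin m) = Sum.inl i from hw)
  · obtain ⟨z, h1, h2⟩ := hw
    have h2' : z = Sum.inl i := h2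
    subst h2'
    have := arc_vu.mp h1
    omega
  · obtain ⟨z, h1, z', h2, h3⟩ := hw
    have h3' : z' = Sum.inl i := h3
    subst h3'
    cases z with
    | inl a => exact arc_uu h2
    | inr w =>
      have hw0 := arc_vu.mp h2
      have := ((arc_vv.mp h1).2 i.val i.isLt).2
      omega

end main
section main2
variable {k m : ℕ}

lemma walk_vv (hm9 : m ≤ 3^(2*k)) (j l : Fin m) :
    ∃ p ≤ 3, walkLen (gammaArcKM 3 k) p (.inr j) (.inr l) := by
  have hm0 : 0 < m := j.pos
  by_cases hjl : j = l
  · exact ⟨0, by omega, show (Sum.inr j : Fin k ⊕ Fin m) = Sum.inr l from congrArg _ hjl⟩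
  have hj9 : j.val < 3^(2*k) := lt_of_lt_of_le j.isLt hm9
  have hl9 : l.val < 3^(2*k) := lt_of_lt_of_le l.isLt hm9
  set v0 : Fin m := ⟨0, hm0⟩ with hv0
  set wa : Fin m := ⟨wL k j.val, lt_of_le_of_lt (wL_le k _ hj9) j.isLt⟩ with hwa
  set wb : Fin m := ⟨wE k l.val, lt_of_le_of_lt (wE_le k _ hl9) l.isLt⟩ with hwb
  have ha_j_wa : j.val ≠ 0 → gammaArcKM 3 k (.inr j) (.inr wa) := by
    intro hj0
    have hne : j ≠ wa := by
      intro he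
      exact hj0 (wL_eq_self hj9 (congrArg Fin.val he).symm)
    refine arc_vv.mpr ⟨hne, fun r hr => ?_⟩
    show dg (wL k j.val) (2*r) ≤ dg j.val (2*r) + 1 ∧
      dg j.val (2*r+1) ≤ dg (wL k j.val) (2*r+1) + 1
    rw [dg_wL_even, dg_wL_odd hr]
    omega
  have ha_wb_l : l.val ≠ 0 → gammaArcKM 3 k (.inr wb) (.inr l) := by
    intro hl0
    have hne : wb ≠ l := by
      intro he
      exact hl0 (wE_eq_self hl9 (congrArg Fin.val he))
    refine arc_vv.mpr ⟨hne, fun r hr => ?_⟩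
    show dg l.val (2*r) ≤ dg (wE k l.val) (2*r) + 1 ∧
      dg (wE k l.val) (2*r+1) ≤ dg l.val (2*r+1) + 1
    rw [dg_wE_even hr, dg_wE_odd]
    omega
  have ha_wa_v0 : wa.val ≠ 0 → gammaArcKM 3 k (.inr wa) (.inr v0) := by
    intro h0
    refine arc_vv.mpr ⟨fin_ne_of_val h0, fun r hr => ?_⟩
    show dg 0 (2*r) ≤ dg (wL k j.val) (2*r) + 1 ∧
      dg (wL k j.val) (2*r+1) ≤ dg 0 (2*r+1) + 1
    rw [dg_wL_odd hr, dg_zero, dg_zero]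
    have := dg_lt j.val (2*r+1)
    omega
  have ha_v0_wb : wb.val ≠ 0 → gammaArcKM 3 k (.inr v0) (.inr wb) := by
    intro h0
    refine arc_vv.mpr ⟨fun he => h0 (congrArg Fin.val he).symm, fun r hr => ?_⟩
    show dg (wE k l.val) (2*r) ≤ dg 0 (2*r) + 1 ∧
      dg 0 (2*r+1) ≤ dg (wE k l.val) (2*r+1) + 1
    rw [dg_wE_even hr, dg_zero, dg_zero]
    have := dg_lt l.val (2*r)
    omega
  have ha_wa_wb : wa.val ≠ 0 → gammaArcKM 3 k (.inr wa) (.inr wb) := by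
    intro h0
    have hne : wa ≠ wb := by
      intro he
      exact h0 (wL_eq_wE (congrArg Fin.val he))
    refine arc_vv.mpr ⟨hne, fun r hr => ?_⟩
    show dg (wE k l.val) (2*r) ≤ dg (wL k j.val) (2*r) + 1 ∧
      dg (wL k j.val) (2*r+1) ≤ dg (wE k l.val) (2*r+1) + 1
    rw [dg_wE_even hr, dg_wE_odd, dg_wL_even, dg_wL_odd hr]
    have := dg_lt l.val (2*r)
    have := dg_lt j.val (2*r+1)
    omega
  by_cases hj0 : j.val = 0
  · have hjv0 : j = v0 := Fin.ext hj0
    by_cases hb0 : wE k l.val = 0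
    · refine ⟨1, by omega, walk1 (arc_vv.mpr ⟨hjl, fun r hr => ?_⟩)⟩
      have h1 := wE_eq_zero hb0 hr
      rw [hjv0]
      show dg l.val (2*r) ≤ dg (0:ℕ) (2*r) + 1 ∧ dg (0:ℕ) (2*r+1) ≤ dg l.val (2*r+1) + 1
      rw [dg_zero, dg_zero]
      omega
    · have hl0 : l.val ≠ 0 := by
        intro h
        apply hjl
        exact Fin.ext (by rw [hj0, h])
      rw [hjv0]
      exact ⟨2, by omega, walk2 (ha_v0_wb hb0) (ha_wb_l hl0)⟩
  · by_cases hl0 : l.val = 0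
    · have hlv0 : l = v0 := Fin.ext hl0
      by_cases ha0 : wL k j.val = 0
      · refine ⟨1, by omega, walk1 (arc_vv.mpr ⟨hjl, fun r hr => ?_⟩)⟩
        have h1 := wL_eq_zero ha0 hr
        rw [hlv0]
        show dg (0:ℕ) (2*r) ≤ dg j.val (2*r) + 1 ∧ dg j.val (2*r+1) ≤ dg (0:ℕ) (2*r+1) + 1
        rw [dg_zero, dg_zero]
        omega
      · rw [hlv0]
        exact ⟨2, by omega, walk2 (ha_j_wa hj0) (ha_wa_v0 ha0)⟩
    · have ha_j_v0 : wL k j.val = 0 → gammaArcKM 3 k (.inr j) (.inr v0) := by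
        intro ha0
        refine arc_vv.mpr ⟨fin_ne_of_val hj0, fun r hr => ?_⟩
        have h1 := wL_eq_zero ha0 hr
        show dg (0:ℕ) (2*r) ≤ dg j.val (2*r) + 1 ∧ dg j.val (2*r+1) ≤ dg (0:ℕ) (2*r+1) + 1
        rw [dg_zero, dg_zero]
        omega
      have ha_v0_l : wE k l.val = 0 → gammaArcKM 3 k (.inr v0) (.inr l) := by
        intro hb0
        refine arc_vv.mpr ⟨fun he => hl0 (congrArg Fin.val he).symm, fun r hr => ?_⟩
        have h1 := wE_eq_zero hb0 hr
        show dg l.val (2*r) ≤ dg (0:ℕ) (2*r) + 1 ∧ dg (0:ℕ) (2*r+1) ≤ dg l.val (2*r+1) + 1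
        rw [dg_zero, dg_zero]
        omega
      by_cases ha0 : wL k j.val = 0
      · by_cases hb0 : wE k l.val = 0
        · exact ⟨2, by omega, walk2 (ha_j_v0 ha0) (ha_v0_l hb0)⟩
        · exact ⟨3, by omega, walk3 (ha_j_v0 ha0) (ha_v0_wb hb0) (ha_wb_l hl0)⟩
      · by_cases hb0 : wE k l.val = 0
        · exact ⟨3, by omega, walk3 (ha_j_wa hj0) (ha_wa_v0 ha0) (ha_v0_l hb0)⟩
        · exact ⟨3, by omega, walk3 (ha_j_wa hj0) (ha_wa_wb ha0) (ha_wb_l hl0)⟩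

lemma reach (hm9 : m ≤ 3^(2*k)) (hm0 : 0 < m) :
    ∀ x y : Fin k ⊕ Fin m, ∃ p ≤ 3, walkLen (gammaArcKM 3 k) p x y := by
  intro x y
  set v0 : Fin m := ⟨0, hm0⟩ with hv0
  cases x with
  | inl i =>
    cases y with
    | inl i' =>
      by_cases hii : i = i'
      · exact ⟨0, by omega, show (Sum.inl i : Fin k ⊕ Fin m) = Sum.inl i' from congrArg _ hii⟩
      · refine ⟨2, by omega, walk2 (z := Sum.inr v0) (arc_uv.mpr ?_) (arc_vu.mpr ?_)⟩
        · exact dg_zero _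
        · exact dg_zero _
    | inr j =>
      refine ⟨dg j.val (2*i.val) + 1, ?_, walk_lu hm9 i j⟩
      have := dg_lt j.val (2*i.val)
      omega
  | inr j =>
    cases y with
    | inl i =>
      refine ⟨dg j.val (2*i.val+1) + 1, ?_, walk_ul hm9 j i⟩
      have := dg_lt j.val (2*i.val+1)
      omega
    | inr l => exact walk_vv hm9 j l

lemma ddist_le3 (hm9 : m ≤ 3^(2*k)) (hm0 : 0 < m) (x y : Fin k ⊕ Fin m) :
    ddist (gammaArcKM 3 k) x y ≤ 3 := by
  obtain ⟨p, hp, hw⟩ := reach hm9 hm0 x y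
  exact le_trans (ddist_le hw) hp

lemma diam_eq (hk : 0 < k) (hm : 3 ≤ m) (hm9 : m ≤ 3^(2*k)) :
    diam (gammaArcKM 3 k (m := m)) = 3 := by
  have hm0 : 0 < m := by omega
  set i0 : Fin k := ⟨0, hk⟩ with hi0
  set v2 : Fin m := ⟨2, by omega⟩ with hv2
  have h3 : ddist (gammaArcKM 3 k) (Sum.inl i0) (Sum.inr v2) = 3 := by
    rw [ddist_lu hm9 i0 v2]
    show dg 2 (2*0) + 1 = 3
    norm_num [dg]
  have hmem : (3:ℕ) ∈ {p | ∃ x y : Fin k ⊕ Fin m, ddist (gammaArcKM 3 k) x y = p} :=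
    ⟨Sum.inl i0, Sum.inr v2, h3⟩
  have hub : ∀ b ∈ {p | ∃ x y : Fin k ⊕ Fin m, ddist (gammaArcKM 3 k) x y = p}, b ≤ 3 := by
    rintro b ⟨x, y, rfl⟩
    exact ddist_le3 hm9 hm0 x y
  exact le_antisymm (csSup_le ⟨3, hmem⟩ hub) (le_csSup ⟨3, hub⟩ hmem)

end main2
section main3
variable {k m : ℕ}

lemma resolving (hk : 0 < k) (hm9 : m ≤ 3^(2*k)) (hm0 : 0 < m) :
    IsWeaklyResolving (gammaArcKM 3 k (m := m))
      ↑(Finset.univ.image (Sum.inl : Fin k → Fin k ⊕ Fin m)) := by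
  intro u v h
  have h' : ∀ i : Fin k, twoDist (gammaArcKM 3 k) (Sum.inl i) u
      = twoDist (gammaArcKM 3 k) (Sum.inl i) v := fun i =>
    h _ (Finset.mem_coe.mpr (Finset.mem_image_of_mem _ (Finset.mem_univ i)))
  set i0 : Fin k := ⟨0, hk⟩ with hi0
  cases u with
  | inl i =>
    cases v with
    | inl i' =>
      by_contra hne
      have hii : i ≠ i' := fun e => hne (congrArg _ e)
      have f1 : ddist (gammaArcKM 3 k (m := m)) (Sum.inl i) (Sum.inl i)
          = ddist (gammaArcKM 3 k) (Sum.inl i) (Sum.inl i') := congrArg Prod.fst (h' i)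
      rw [ddist_self] at f1
      have e2 : 1 ≤ ddist (gammaArcKM 3 k (m := m)) (Sum.inl i) (Sum.inl i') := by
        apply ddist_pos (fun e => hii (Sum.inl.inj e))
        obtain ⟨p, _, hw⟩ := reach hm9 hm0 (Sum.inl i) (Sum.inl i')
        exact ⟨p, hw⟩
      omega
    | inr j =>
      have f1 : ddist (gammaArcKM 3 k (m := m)) (Sum.inl i) (Sum.inl i)
          = ddist (gammaArcKM 3 k) (Sum.inl i) (Sum.inr j) := congrArg Prod.fst (h' i)
      rw [ddist_self, ddist_lu hm9] at f1
      omega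
  | inr j =>
    cases v with
    | inl i =>
      have f1 : ddist (gammaArcKM 3 k (m := m)) (Sum.inl i) (Sum.inr j)
          = ddist (gammaArcKM 3 k) (Sum.inl i) (Sum.inl i) := congrArg Prod.fst (h' i)
      rw [ddist_self, ddist_lu hm9] at f1
      omega
    | inr l =>
      have hdg : ∀ p < 2*k, dg j.val p = dg l.val p := by
        intro p hp
        have hi : p/2 < k := by omega
        have f1 : ddist (gammaArcKM 3 k (m := m)) (Sum.inl ⟨p/2, hi⟩) (Sum.inr j)
            = ddist (gammaArcKM 3 k) (Sum.inl ⟨p/2, hi⟩) (Sum.inr l) :=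
          congrArg Prod.fst (h' ⟨p/2, hi⟩)
        have f2 : ddist (gammaArcKM 3 k (m := m)) (Sum.inr j) (Sum.inl ⟨p/2, hi⟩)
            = ddist (gammaArcKM 3 k) (Sum.inr l) (Sum.inl ⟨p/2, hi⟩) :=
          congrArg Prod.snd (h' ⟨p/2, hi⟩)
        rw [ddist_lu hm9, ddist_lu hm9] at f1
        rw [ddist_ul hm9, ddist_ul hm9] at f2
        have hcase : p = 2*(p/2) ∨ p = 2*(p/2)+1 := by omega
        rcases hcase with hc | hc <;> rw [hc]
        · exact (by omega : dg j.val (2*((⟨p/2,hi⟩:Fin k)).val) = dg l.val (2*((⟨p/2,hi⟩:Fin k)).val))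
        · exact (by omega : dg j.val (2*((⟨p/2,hi⟩:Fin k)).val+1) = dg l.val (2*((⟨p/2,hi⟩:Fin k)).val+1))
      have := eq_of_dg_eq (lt_of_lt_of_le j.isLt hm9) (lt_of_lt_of_le l.isLt hm9) hdg
      exact congrArg _ (Fin.ext this)

lemma card_bound (hm9 : m ≤ 3^(2*k)) (hm0 : 0 < m)
    (S : Finset (Fin k ⊕ Fin m)) (hS : IsWeaklyResolving (gammaArcKM 3 k (m := m)) ↑S) :
    k + m ≤ S.card + 3 ^ (2 * S.card) := by
  classical
  have hpos : ∀ x y : Fin k ⊕ Fin m, x ≠ y → 1 ≤ ddist (gammaArcKM 3 k) x y := by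
    intro x y hxy
    apply ddist_pos hxy
    obtain ⟨p, _, hw⟩ := reach hm9 hm0 x y
    exact ⟨p, hw⟩
  let F : ↥(Sᶜ) → (↥S → Fin 3 × Fin 3) := fun x w =>
    (⟨ddist (gammaArcKM 3 k) w.1 x.1 - 1, by have := ddist_le3 hm9 hm0 w.1 x.1; omega⟩,
     ⟨ddist (gammaArcKM 3 k) x.1 w.1 - 1, by have := ddist_le3 hm9 hm0 x.1 w.1; omega⟩)
  have hinj : Function.Injective F := by
    intro x y hxy
    have hx : x.1 ∉ S := Finset.mem_compl.mp x.2
    have hy : y.1 ∉ S := Finset.mem_compl.mp y.2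
    apply Subtype.ext
    apply hS
    intro w hw
    have h1 : ddist (gammaArcKM 3 k) w x.1 - 1 = ddist (gammaArcKM 3 k) w y.1 - 1 :=
      congrArg (fun g => (g ⟨w, hw⟩).1.val) hxy
    have h2 : ddist (gammaArcKM 3 k) x.1 w - 1 = ddist (gammaArcKM 3 k) y.1 w - 1 :=
      congrArg (fun g => (g ⟨w, hw⟩).2.val) hxy
    have px1 := hpos w x.1 (fun e => hx (e ▸ hw))
    have px2 := hpos x.1 w (fun e => hx (e.symm ▸ hw))
    have py1 := hpos w y.1 (fun e => hy (e ▸ hw))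
    have py2 := hpos y.1 w (fun e => hy (e.symm ▸ hw))
    refine Prod.ext ?_ ?_
    · show ddist (gammaArcKM 3 k) w x.1 = ddist (gammaArcKM 3 k) w y.1
      omega
    · show ddist (gammaArcKM 3 k) x.1 w = ddist (gammaArcKM 3 k) y.1 w
      omega
  have hcard := Fintype.card_le_of_injective F hinj
  have e1 : Fintype.card ↥(Sᶜ) = (k + m) - S.card := by
    simp [Finset.card_compl]
  have e2 : Fintype.card (↥S → Fin 3 × Fin 3) = 9 ^ S.card := by
    simp [Fintype.card_fun]
  have e3 : (3:ℕ) ^ (2 * S.card) = 9 ^ S.card := by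
    rw [pow_mul]; norm_num
  rw [e1, e2] at hcard
  omega

end main3
end Gamma3Aux


open Gamma3Aux in
/-- Lemma 2.5(iii). For `n ≥ 4`, the digraph `Γ(n,3)` is strongly
connected with diameter `3` and `dim(Γ(n,3)) = f(n,3)`. -/
theorem gamma_n3_dim (n : ℕ) (hn : 4 ≤ n) :
    IsStronglyConnected (gammaArcKM 3 (fnd n 3) (m := n - fnd n 3)) ∧
    diam (gammaArcKM 3 (fnd n 3) (m := n - fnd n 3)) = 3 ∧
    wdim (gammaArcKM 3 (fnd n 3) (m := n - fnd n 3)) = fnd n 3 := by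
  have hmemf : fnd n 3 ∈ {k | 0 < k ∧ n ≤ k + 3 ^ (2*k)} :=
    Nat.sInf_mem ⟨n, by omega, Nat.le_add_right n _⟩
  set k := fnd n 3 with hkdef
  have hk : 0 < k := hmemf.1
  have hkn : n ≤ k + 3^(2*k) := hmemf.2
  have hkle : k ≤ n := Nat.sInf_le ⟨by omega, Nat.le_add_right n _⟩
  set m := n - k with hmdef
  have hm9 : m ≤ 3^(2*k) := by omega
  have hm : 3 ≤ m := by
    by_cases hk1 : k = 1
    · omega
    · have h2 : k - 1 ∉ {k | 0 < k ∧ n ≤ k + 3 ^ (2*k)} :=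
        Nat.notMem_of_lt_sInf (show k - 1 < fnd n 3 by omega)
      simp only [Set.mem_setOf_eq, not_and, not_le] at h2
      have h3 := h2 (by omega)
      have h4 : (9:ℕ) ≤ 3 ^ (2*(k-1)) := by
        calc (9:ℕ) = 3^2 := by norm_num
        _ ≤ 3 ^ (2*(k-1)) := Nat.pow_le_pow_right (by norm_num) (by omega)
      omega
  have hm0 : 0 < m := by omega
  refine ⟨?_, ?_, ?_⟩
  · intro x y
    obtain ⟨p, _, hw⟩ := reach hm9 hm0 x y
    exact ⟨p, hw⟩
  · exact diam_eq hk hm hm9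
  · have hub : k ∈ {c | ∃ S : Finset (Fin k ⊕ Fin m), S.card = c ∧
        IsWeaklyResolving (gammaArcKM 3 k (m := m)) ↑S} := by
      refine ⟨Finset.univ.image Sum.inl, ?_, resolving hk hm9 hm0⟩
      rw [Finset.card_image_of_injective _ Sum.inl_injective, Finset.card_univ,
        Fintype.card_fin]
    have hK : wdim (gammaArcKM 3 k (m := m)) ∈ {c | ∃ S : Finset (Fin k ⊕ Fin m),
        S.card = c ∧ IsWeaklyResolving (gammaArcKM 3 k (m := m)) ↑S} := Nat.sInf_mem ⟨k, hub⟩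
    obtain ⟨S, hScard, hSres⟩ := hK
    apply le_antisymm
    · exact Nat.sInf_le hub
    · show k ≤ wdim (gammaArcKM 3 k (m := m))
      rw [← hScard]
      have hb := card_bound hm9 hm0 S hSres
      have hs0 : 0 < S.card := by
        rcases Nat.eq_zero_or_pos S.card with h0 | h0
        · rw [h0] at hb
          norm_num at hb
          omega
        · exact h0
      exact Nat.sInf_le (⟨hs0, by omega⟩ : S.card ∈ {c | 0 < c ∧ n ≤ c + 3 ^ (2*c)})
end

section
/- Let k and d be positive integers and let Γ be a strongly connected digraph with dim(Γ) = k and diameter d. Then Γ is isomorphic to a subdigraph of the digraph Γ̄(d^(2k)+k, d), which is obtained from Γ(d^(2k)+k, d) by adding both arcs (u_i, u_j) and (u_j, u_i) for all 1 ≤ i < j ≤ k. -/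
section Aux

variable {V : Type*} {A : V → V → Prop}

lemma walkLen_snoc : ∀ {n : ℕ} {x y z : V}, walkLen A n x y → A y z → walkLen A (n + 1) x z
  | 0, x, y, z, h, hyz => by subst h; exact ⟨z, hyz, rfl⟩
  | n + 1, x, y, z, ⟨u, hxu, hw⟩, hyz => ⟨u, hxu, walkLen_snoc hw hyz⟩

lemma ddist_walk (hsc : IsStronglyConnected A) (x y : V) :
    walkLen A (ddist A x y) x y :=
  Nat.sInf_mem (hsc x y)

lemma ddist_le {n : ℕ} {x y : V} (h : walkLen A n x y) : ddist A x y ≤ n :=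
  Nat.sInf_le h

lemma eq_of_ddist_eq_zero (hsc : IsStronglyConnected A) {x y : V}
    (h : ddist A x y = 0) : x = y := by
  have := ddist_walk hsc x y
  rw [h] at this
  exact this

lemma one_le_ddist (hsc : IsStronglyConnected A) {x y : V} (h : x ≠ y) :
    1 ≤ ddist A x y := by
  rcases Nat.eq_zero_or_pos (ddist A x y) with h0 | h1
  · exact absurd (eq_of_ddist_eq_zero hsc h0) h
  · exact h1

lemma ddist_le_one {x y : V} (h : A x y) : ddist A x y ≤ 1 :=
  ddist_le ⟨y, h, rfl⟩

lemma ddist_triangle_right (hsc : IsStronglyConnected A) {y z : V} (x : V) (h : A y z) :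
    ddist A x z ≤ ddist A x y + 1 :=
  ddist_le (walkLen_snoc (ddist_walk hsc x y) h)

lemma ddist_triangle_left (hsc : IsStronglyConnected A) {x y : V} (z : V) (h : A x y) :
    ddist A x z ≤ ddist A y z + 1 := by
  have : walkLen A (ddist A y z + 1) x z := ⟨y, h, ddist_walk hsc y z⟩
  exact ddist_le this

lemma ddist_le_diam [Fintype V] (x y : V) : ddist A x y ≤ diam A := by
  apply le_csSup
  · have hsub : {m | ∃ x y : V, ddist A x y = m} ⊆
        Set.range (fun p : V × V => ddist A p.1 p.2) := by
      rintro m ⟨a, b, rfl⟩; exact ⟨(a, b), rfl⟩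
    exact ((Set.finite_range _).subset hsub).bddAbove
  · exact ⟨x, y, rfl⟩

lemma fnd_spec (k d : ℕ) (hk : 0 < k) (hd : 0 < d) :
    fnd (d ^ (2 * k) + k) d = k := by
  have hmem : k ∈ {j | 0 < j ∧ d ^ (2 * k) + k ≤ j + d ^ (2 * j)} :=
    ⟨hk, by rw [add_comm]⟩
  unfold fnd
  refine le_antisymm (Nat.sInf_le hmem) ?_
  by_contra hcon
  push_neg at hcon
  obtain ⟨hspos, hsle⟩ := Nat.sInf_mem (⟨k, hmem⟩ :
    {j | 0 < j ∧ d ^ (2 * k) + k ≤ j + d ^ (2 * j)}.Nonempty)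
  have hpow : d ^ (2 * sInf {j | 0 < j ∧ d ^ (2 * k) + k ≤ j + d ^ (2 * j)})
      ≤ d ^ (2 * k) := Nat.pow_le_pow_right hd (by omega)
  omega

end Aux

/-- Lemma 2.6(i). A `k`-dimensional digraph with diameter `d` is
isomorphic to a subdigraph of `Γ̄(d^(2k)+k, d)`. -/
theorem embeds_in_gammaBar {V : Type*} [Fintype V] (A : V → V → Prop)
    (hirr : Irreflexive A) (hsc : IsStronglyConnected A)
    (k d : ℕ) (hk : 0 < k) (hd : 0 < d)
    (hdim : wdim A = k) (hdiam : diam A = d) :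
    ∃ φ : V → Fin (fnd (d ^ (2 * k) + k) d) ⊕ Fin (d ^ (2 * k) + k - fnd (d ^ (2 * k) + k) d),
      Function.Injective φ ∧
      ∀ x y : V, A x y → gammaBarArcKM d (fnd (d ^ (2 * k) + k) d) (φ x) (φ y) := by
  have hf : fnd (d ^ (2 * k) + k) d = k := fnd_spec k d hk hd
  rw [hf, Nat.add_sub_cancel]
  -- obtain a weakly resolving set of size k
  have huniv : IsWeaklyResolving A ↑(Finset.univ : Finset V) := by
    intro u v h
    have := h u (Finset.mem_coe.mpr (Finset.mem_univ u))
    have h0 : ddist A u v = 0 := by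
      have : ddist A u u = ddist A u v := congrArg Prod.fst this
      rw [ddist_self] at this
      omega
    exact eq_of_ddist_eq_zero hsc h0
  have hne : {j | ∃ S : Finset V, S.card = j ∧ IsWeaklyResolving A ↑S}.Nonempty :=
    ⟨(Finset.univ : Finset V).card, Finset.univ, rfl, huniv⟩
  have hmem : ∃ S : Finset V, S.card = k ∧ IsWeaklyResolving A ↑S := by
    have h1 := Nat.sInf_mem hne
    rwa [show sInf {j | ∃ S : Finset V, S.card = j ∧ IsWeaklyResolving A ↑S} = k from hdim]
      at h1
  obtain ⟨S, hScard, hSres⟩ := hmem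
  have hcard : Fintype.card {x // x ∈ S} = k := by
    rw [Fintype.card_coe]; exact hScard
  let e : {x // x ∈ S} ≃ Fin k := Fintype.equivFinOfCardEq hcard
  let w : Fin k → V := fun i => (e.symm i : V)
  have hwmem : ∀ i, w i ∈ S := fun i => (e.symm i).2
  have hwe : ∀ (x : V) (hx : x ∈ S), w (e ⟨x, hx⟩) = x := by
    intro x hx
    show ((e.symm (e ⟨x, hx⟩) : {x // x ∈ S}) : V) = x
    rw [Equiv.symm_apply_apply]
  -- distance bounds
  have hdle : ∀ x y : V, ddist A x y ≤ d := by
    intro x y; rw [← hdiam]; exact ddist_le_diam x y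
  -- the coordinate function
  have hhalf : ∀ i : Fin (2 * k), i.val / 2 < k := by
    intro i; have := i.isLt; omega
  let c : V → Fin (2 * k) → Fin d := fun v i =>
    ⟨(if i.val % 2 = 0 then ddist A (w ⟨i.val / 2, hhalf i⟩) v
       else ddist A v (w ⟨i.val / 2, hhalf i⟩)) - 1, by
      split <;> · have := hdle (w ⟨i.val / 2, hhalf i⟩) v
                  have := hdle v (w ⟨i.val / 2, hhalf i⟩)
                  omega⟩
  have hr2 : ∀ r : Fin k, 2 * r.val < 2 * k := by intro r; have := r.isLt; omega
  have hr21 : ∀ r : Fin k, 2 * r.val + 1 < 2 * k := by intro r; have := r.isLt; omega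
  have hceven : ∀ (v : V) (r : Fin k),
      (c v ⟨2 * r.val, hr2 r⟩ : ℕ) = ddist A (w r) v - 1 := by
    intro v r
    have h0 : (2 * r.val) % 2 = 0 := by omega
    have h1 : (⟨(2 * r.val) / 2, hhalf ⟨2 * r.val, hr2 r⟩⟩ : Fin k) = r :=
      Fin.ext (by show 2 * r.val / 2 = r.val; omega)
    simp only [c, h0, if_pos, h1]
  have hcodd : ∀ (v : V) (r : Fin k),
      (c v ⟨2 * r.val + 1, hr21 r⟩ : ℕ) = ddist A v (w r) - 1 := by
    intro v r
    have h0 : ¬ ((2 * r.val + 1) % 2 = 0) := by omega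
    have h1 : (⟨(2 * r.val + 1) / 2, hhalf ⟨2 * r.val + 1, hr21 r⟩⟩ : Fin k) = r :=
      Fin.ext (by show (2 * r.val + 1) / 2 = r.val; omega)
    simp only [c, h0, if_neg, if_false, h1]
  -- decoding
  have hdec : ∀ (v : V) (i : Fin (2 * k)),
      gcoord d (finFunctionFinEquiv (c v) : Fin (d ^ (2 * k))).val i.val
        = (c v i : ℕ) + 1 := by
    intro v i
    have h1 : finFunctionFinEquiv.symm (finFunctionFinEquiv (c v)) i = c v i := by
      rw [Equiv.symm_apply_apply]
    have h2 : (finFunctionFinEquiv (c v) : Fin (d ^ (2 * k))).val / d ^ i.val % d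
        = (c v i : ℕ) := congrArg Fin.val h1
    simp only [gcoord, h2]
  have hgeven : ∀ (v : V) (r : Fin k), v ≠ w r →
      gcoord d (finFunctionFinEquiv (c v) : Fin (d ^ (2 * k))).val (2 * r.val)
        = ddist A (w r) v := by
    intro v r hv
    have := hdec v ⟨2 * r.val, hr2 r⟩
    rw [hceven v r] at this
    have hpos := one_le_ddist hsc (fun h => hv h.symm)
    rw [this]; omega
  have hgodd : ∀ (v : V) (r : Fin k), v ≠ w r →
      gcoord d (finFunctionFinEquiv (c v) : Fin (d ^ (2 * k))).val (2 * r.val + 1)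
        = ddist A v (w r) := by
    intro v r hv
    have := hdec v ⟨2 * r.val + 1, hr21 r⟩
    rw [hcodd v r] at this
    have hpos := one_le_ddist hsc hv
    rw [this]; omega
  -- key injectivity of c on vertices outside S
  have hkey : ∀ x y : V, x ∉ S → y ∉ S → c x = c y → x = y := by
    intro x y hx hy hcc
    apply hSres
    intro ws hws
    have hws' : ws ∈ S := hws
    set i := e ⟨ws, hws'⟩ with hi
    have hwsi : w i = ws := hwe ws hws'
    have h1 := congrArg Fin.val (congrFun hcc ⟨2 * i.val, hr2 i⟩)
    have h2 := congrArg Fin.val (congrFun hcc ⟨2 * i.val + 1, hr21 i⟩)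
    rw [hceven x i, hceven y i] at h1
    rw [hcodd x i, hcodd y i] at h2
    have hx1 : 1 ≤ ddist A (w i) x := one_le_ddist hsc (fun h => hx (h ▸ hwmem i))
    have hy1 : 1 ≤ ddist A (w i) y := one_le_ddist hsc (fun h => hy (h ▸ hwmem i))
    have hx2 : 1 ≤ ddist A x (w i) :=
      one_le_ddist hsc (fun h => hx (h.symm ▸ hwmem i))
    have hy2 : 1 ≤ ddist A y (w i) :=
      one_le_ddist hsc (fun h => hy (h.symm ▸ hwmem i))
    rw [← hwsi]
    unfold twoDist
    have e1 : ddist A (w i) x = ddist A (w i) y := by omega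
    have e2 : ddist A x (w i) = ddist A y (w i) := by omega
    rw [e1, e2]
  -- the embedding
  classical
  let φ : V → Fin k ⊕ Fin (d ^ (2 * k)) := fun v =>
    if h : v ∈ S then .inl (e ⟨v, h⟩) else .inr (finFunctionFinEquiv (c v))
  have hφin : ∀ (v) (h : v ∈ S), φ v = .inl (e ⟨v, h⟩) := fun v h => dif_pos h
  have hφout : ∀ (v) (h : v ∉ S), φ v = .inr (finFunctionFinEquiv (c v)) :=
    fun v h => dif_neg h
  refine ⟨φ, ?_, ?_⟩
  · intro x y hxy
    by_cases hx : x ∈ S <;> by_cases hy : y ∈ S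
    · rw [hφin x hx, hφin y hy] at hxy
      exact congrArg Subtype.val (e.injective (Sum.inl.inj hxy))
    · rw [hφin x hx, hφout y hy] at hxy
      exact (Sum.inl_ne_inr hxy).elim
    · rw [hφout x hx, hφin y hy] at hxy
      exact (Sum.inr_ne_inl hxy).elim
    · rw [hφout x hx, hφout y hy] at hxy
      exact hkey x y hx hy (finFunctionFinEquiv.injective (Sum.inr.inj hxy))
  · intro x y hxy
    have hne' : x ≠ y := fun h => hirr x (h ▸ hxy)
    by_cases hx : x ∈ S <;> by_cases hy : y ∈ S
    · -- both in S
      rw [hφin x hx, hφin y hy]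
      show e ⟨x, hx⟩ ≠ e ⟨y, hy⟩
      intro h
      exact hne' (congrArg Subtype.val (e.injective h))
    · -- x in S, y not: arc (u_i, v_j)
      rw [hφin x hx, hφout y hy]
      show gammaArcKM d k (.inl (e ⟨x, hx⟩)) (.inr (finFunctionFinEquiv (c y)))
      show gcoord d (finFunctionFinEquiv (c y) : Fin (d ^ (2 * k))).val
        (2 * (e ⟨x, hx⟩).val) = 1
      have hyx : y ≠ w (e ⟨x, hx⟩) := by rw [hwe x hx]; exact hne'.symm
      rw [hgeven y (e ⟨x, hx⟩) hyx, hwe x hx]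
      have h1 := ddist_le_one hxy
      have h2 := one_le_ddist hsc hne'
      omega
    · -- x not in S, y in S: arc (v_j, u_i)
      rw [hφout x hx, hφin y hy]
      show gammaArcKM d k (.inr (finFunctionFinEquiv (c x))) (.inl (e ⟨y, hy⟩))
      show gcoord d (finFunctionFinEquiv (c x) : Fin (d ^ (2 * k))).val
        (2 * (e ⟨y, hy⟩).val + 1) = 1
      have hxw : x ≠ w (e ⟨y, hy⟩) := by rw [hwe y hy]; exact hne'
      rw [hgodd x (e ⟨y, hy⟩) hxw, hwe y hy]
      have h1 := ddist_le_one hxy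
      have h2 := one_le_ddist hsc hne'
      omega
    · -- neither in S
      rw [hφout x hx, hφout y hy]
      show gammaArcKM d k (.inr (finFunctionFinEquiv (c x)))
        (.inr (finFunctionFinEquiv (c y)))
      refine ⟨?_, ?_⟩
      · intro h
        exact hne' (hkey x y hx hy (finFunctionFinEquiv.injective h))
      · intro r hr
        set rf : Fin k := ⟨r, hr⟩ with hrf
        have hxw : x ≠ w rf := fun h => hx (h ▸ hwmem rf)
        have hyw : y ≠ w rf := fun h => hy (h ▸ hwmem rf)
        constructor
        · rw [show (2 : ℕ) * r = 2 * rf.val from rfl,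
            hgeven x rf hxw, hgeven y rf hyw]
          exact ddist_triangle_right hsc (w rf) hxy
        · rw [show (2 : ℕ) * r + 1 = 2 * rf.val + 1 from rfl,
            hgodd x rf hxw, hgodd y rf hyw]
          exact ddist_triangle_left hsc (w rf) hxy
end

section
/- Let k and d be positive integers with d ≥ 2, and let e(k,d) denote the number of arcs of family (F3) in the digraph Γ(d^(2k)+k, d), i.e., the number of arcs between vertices v_j. Then e(k,d) = ((d² + 3d − 2)/2)^(2k) − d^(2k). -/
/-! ### Auxiliary lemmas for Statement 8 -/

lemma fnd_special (k d : ℕ) (hk : 0 < k) (hd : 2 ≤ d) :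
    fnd (d ^ (2 * k) + k) d = k := by
  unfold fnd
  refine le_antisymm (Nat.sInf_le ⟨hk, by omega⟩) ?_
  refine le_csInf ⟨k, hk, by omega⟩ ?_
  rintro b ⟨hb0, hble⟩
  by_contra hlt
  push_neg at hlt
  have h1 : d ^ (2 * b) ≤ d ^ (2 * k) :=
    Nat.pow_le_pow_right (by omega) (by omega)
  omega

lemma filter_lt_card (d m : ℕ) :
    ((Finset.univ : Finset (Fin d)).filter fun (y : Fin d) => (y : ℕ) < m).card = min m d := by
  rw [← Finset.card_range (min m d)]
  apply Finset.card_bij (fun (a : Fin d) _ => (a : ℕ))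
  · intro a ha
    simp only [Finset.mem_filter, Finset.mem_univ, true_and] at ha
    simp only [Finset.mem_range]
    omega
  · intro a _ b _ h
    exact Fin.val_injective h
  · intro b hb
    simp only [Finset.mem_range] at hb
    refine ⟨⟨b, by omega⟩, ?_, rfl⟩
    simp only [Finset.mem_filter, Finset.mem_univ, true_and]
    omega

lemma sum_min_eq (d : ℕ) (hd : 2 ≤ d) :
    ∑ x ∈ Finset.range d, min (x + 2) d = (d ^ 2 + 3 * d - 2) / 2 := by
  obtain ⟨f, rfl⟩ : ∃ f, d = f + 1 + 1 := ⟨d - 2, by omega⟩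
  have h2 : 2 * ∑ x ∈ Finset.range (f + 1 + 1), min (x + 2) (f + 1 + 1)
      = (f + 1 + 1) ^ 2 + 3 * (f + 1 + 1) - 2 := by
    rw [Finset.sum_range_succ]
    have hcong : ∑ x ∈ Finset.range (f + 1), min (x + 2) (f + 1 + 1)
        = (∑ x ∈ Finset.range (f + 1), x) + 2 * (f + 1) := by
      rw [show (∑ x ∈ Finset.range (f + 1), min (x + 2) (f + 1 + 1))
          = ∑ x ∈ Finset.range (f + 1), (x + 2) from
        Finset.sum_congr rfl fun x hx => by
          simp only [Finset.mem_range] at hx; omega]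
      rw [Finset.sum_add_distrib, Finset.sum_const, Finset.card_range]
      ring
    have hg : (∑ i ∈ Finset.range (f + 1), i) * 2 = f * f + f := by
      rw [Finset.sum_range_id_mul_two]
      simp only [Nat.add_sub_cancel]
      ring
    have hsq : (f + 1 + 1) ^ 2 = f * f + 4 * f + 4 := by ring
    omega
  omega

lemma count_even_pairs (d : ℕ) (hd : 2 ≤ d) :
    Nat.card {pq : Fin d × Fin d // (pq.2 : ℕ) ≤ (pq.1 : ℕ) + 1}
      = (d ^ 2 + 3 * d - 2) / 2 := by
  rw [Nat.card_congr (Equiv.subtypeProdEquivSigmaSubtype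
    fun (x y : Fin d) => (y : ℕ) ≤ (x : ℕ) + 1)]
  rw [Nat.card_eq_fintype_card, Fintype.card_sigma]
  have key : ∀ x : Fin d, Fintype.card {y : Fin d // (y : ℕ) ≤ (x : ℕ) + 1}
      = min ((x : ℕ) + 2) d := by
    intro x
    rw [Fintype.card_subtype]
    rw [Finset.filter_congr (fun (y : Fin d) (_ : y ∈ Finset.univ) =>
      (by omega : (y : ℕ) ≤ (x : ℕ) + 1 ↔ (y : ℕ) < (x : ℕ) + 2))]
    exact filter_lt_card d ((x : ℕ) + 2)
  simp_rw [key]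
  rw [Fin.sum_univ_eq_sum_range (fun i => min (i + 2) d) d]
  exact sum_min_eq d hd

lemma count_odd_pairs (d : ℕ) (hd : 2 ≤ d) :
    Nat.card {pq : Fin d × Fin d // (pq.1 : ℕ) ≤ (pq.2 : ℕ) + 1}
      = (d ^ 2 + 3 * d - 2) / 2 := by
  rw [← count_even_pairs d hd]
  exact Nat.card_congr ((Equiv.prodComm (Fin d) (Fin d)).subtypeEquiv fun a => Iff.rfl)

/-- The per-coordinate condition of family (F3), depending on the parity of the
coordinate index. -/
def Qpred (d s : ℕ) (pq : Fin d × Fin d) : Prop :=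
  if s % 2 = 0 then (pq.2 : ℕ) ≤ (pq.1 : ℕ) + 1 else (pq.1 : ℕ) ≤ (pq.2 : ℕ) + 1

lemma card_Qpred (d : ℕ) (hd : 2 ≤ d) (s : ℕ) :
    Nat.card {pq : Fin d × Fin d // Qpred d s pq} = (d ^ 2 + 3 * d - 2) / 2 := by
  by_cases h2 : s % 2 = 0
  · refine (Nat.card_congr (Equiv.subtypeEquivRight
      (q := fun pq : Fin d × Fin d => (pq.2 : ℕ) ≤ (pq.1 : ℕ) + 1)
      fun pq => by simp only [Qpred, if_pos h2])).trans (count_even_pairs d hd)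
  · refine (Nat.card_congr (Equiv.subtypeEquivRight
      (q := fun pq : Fin d × Fin d => (pq.1 : ℕ) ≤ (pq.2 : ℕ) + 1)
      fun pq => by simp only [Qpred, if_neg h2])).trans (count_odd_pairs d hd)

lemma count_B (k d : ℕ) (hk : 0 < k) (hd : 2 ≤ d) :
    Nat.card {p : Fin (d ^ (2 * k)) × Fin (d ^ (2 * k)) //
        ∀ r < k, gcoord d (p.2 : ℕ) (2 * r) ≤ gcoord d (p.1 : ℕ) (2 * r) + 1 ∧
          gcoord d (p.1 : ℕ) (2 * r + 1) ≤ gcoord d (p.2 : ℕ) (2 * r + 1) + 1}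
      = ((d ^ 2 + 3 * d - 2) / 2) ^ (2 * k) := by
  let E : (Fin (d ^ (2 * k)) × Fin (d ^ (2 * k))) ≃ (Fin (2 * k) → Fin d × Fin d) :=
    (Equiv.prodCongr finFunctionFinEquiv.symm finFunctionFinEquiv.symm).trans
      (Equiv.arrowProdEquivProdArrow (Fin (2 * k)) (fun _ => Fin d) (fun _ => Fin d)).symm
  have hE1 : ∀ (p : Fin (d ^ (2 * k)) × Fin (d ^ (2 * k))) (s : Fin (2 * k)),
      ((E p s).1 : ℕ) = (p.1 : ℕ) / d ^ (s : ℕ) % d := fun p s => rfl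
  have hE2 : ∀ (p : Fin (d ^ (2 * k)) × Fin (d ^ (2 * k))) (s : Fin (2 * k)),
      ((E p s).2 : ℕ) = (p.2 : ℕ) / d ^ (s : ℕ) % d := fun p s => rfl
  have iffh : ∀ p : Fin (d ^ (2 * k)) × Fin (d ^ (2 * k)),
      (∀ r < k, gcoord d (p.2 : ℕ) (2 * r) ≤ gcoord d (p.1 : ℕ) (2 * r) + 1 ∧
          gcoord d (p.1 : ℕ) (2 * r + 1) ≤ gcoord d (p.2 : ℕ) (2 * r + 1) + 1)
        ↔ ∀ s : Fin (2 * k), Qpred d (s : ℕ) (E p s) := by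
    intro p
    constructor
    · intro h s
      have hs := s.isLt
      unfold Qpred
      by_cases h2 : (s : ℕ) % 2 = 0
      · rw [if_pos h2]
        obtain ⟨r, hr⟩ : ∃ r, (s : ℕ) = 2 * r := ⟨(s : ℕ) / 2, by omega⟩
        have h3 := (h r (by omega)).1
        simp only [gcoord] at h3
        rw [hE1 p s, hE2 p s, hr]
        omega
      · rw [if_neg h2]
        obtain ⟨r, hr⟩ : ∃ r, (s : ℕ) = 2 * r + 1 := ⟨(s : ℕ) / 2, by omega⟩
        have h3 := (h r (by omega)).2
        simp only [gcoord] at h3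
        rw [hE1 p s, hE2 p s, hr]
        omega
    · intro h r hr
      constructor
      · have h3 := h ⟨2 * r, by omega⟩
        have hv : ((⟨2 * r, by omega⟩ : Fin (2 * k)) : ℕ) = 2 * r := rfl
        unfold Qpred at h3
        rw [hE1 p _, hE2 p _, hv] at h3
        rw [if_pos (by omega : 2 * r % 2 = 0)] at h3
        simp only [gcoord]
        omega
      · have h3 := h ⟨2 * r + 1, by omega⟩
        have hv : ((⟨2 * r + 1, by omega⟩ : Fin (2 * k)) : ℕ) = 2 * r + 1 := rfl
        unfold Qpred at h3
        rw [hE1 p _, hE2 p _, hv] at h3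
        rw [if_neg (by omega : ¬(2 * r + 1) % 2 = 0)] at h3
        simp only [gcoord]
        omega
  rw [Nat.card_congr ((Equiv.subtypeEquiv E iffh).trans Equiv.subtypePiEquivPi)]
  rw [Nat.card_pi]
  have hfac : ∀ s : Fin (2 * k),
      Nat.card {pq : Fin d × Fin d // Qpred d (s : ℕ) pq} = (d ^ 2 + 3 * d - 2) / 2 :=
    fun s => card_Qpred d hd (s : ℕ)
  simp_rw [hfac]
  rw [Finset.prod_const, Finset.card_univ, Fintype.card_fin]

/-- Lemma 2.7. The number `e(k,d)` of arcs of family (F3) in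
`Γ(d^(2k)+k, d)` equals `((d²+3d-2)/2)^(2k) - d^(2k)`. -/
theorem count_F3_arcs (k d : ℕ) (hk : 0 < k) (hd : 2 ≤ d) :
    Set.ncard {p : Fin (d ^ (2 * k) + k - fnd (d ^ (2 * k) + k) d) ×
                   Fin (d ^ (2 * k) + k - fnd (d ^ (2 * k) + k) d) |
        gammaArcKM d (fnd (d ^ (2 * k) + k) d) (Sum.inr p.1) (Sum.inr p.2)} =
      ((d ^ 2 + 3 * d - 2) / 2) ^ (2 * k) - d ^ (2 * k) := by
  have hfnd := fnd_special k d hk hd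
  have hm : d ^ (2 * k) + k - fnd (d ^ (2 * k) + k) d = d ^ (2 * k) := by
    rw [hfnd]; omega
  rw [hm, hfnd]
  have hset : {p : Fin (d ^ (2 * k)) × Fin (d ^ (2 * k)) |
        gammaArcKM d k (Sum.inr p.1) (Sum.inr p.2)} =
      {p : Fin (d ^ (2 * k)) × Fin (d ^ (2 * k)) |
        ∀ r < k, gcoord d (p.2 : ℕ) (2 * r) ≤ gcoord d (p.1 : ℕ) (2 * r) + 1 ∧
          gcoord d (p.1 : ℕ) (2 * r + 1) ≤ gcoord d (p.2 : ℕ) (2 * r + 1) + 1} \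
      {p : Fin (d ^ (2 * k)) × Fin (d ^ (2 * k)) | p.1 = p.2} := by
    ext p
    constructor
    · rintro ⟨hne, h⟩
      exact ⟨h, hne⟩
    · rintro ⟨h, hne⟩
      exact ⟨hne, h⟩
  rw [hset]
  have hsub : {p : Fin (d ^ (2 * k)) × Fin (d ^ (2 * k)) | p.1 = p.2} ⊆
      {p : Fin (d ^ (2 * k)) × Fin (d ^ (2 * k)) |
        ∀ r < k, gcoord d (p.2 : ℕ) (2 * r) ≤ gcoord d (p.1 : ℕ) (2 * r) + 1 ∧
          gcoord d (p.1 : ℕ) (2 * r + 1) ≤ gcoord d (p.2 : ℕ) (2 * r + 1) + 1} := by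
    intro p hp
    simp only [Set.mem_setOf_eq] at hp ⊢
    intro r _
    rw [hp]
    omega
  rw [Set.ncard_diff hsub]
  have hdiag : {p : Fin (d ^ (2 * k)) × Fin (d ^ (2 * k)) | p.1 = p.2}.ncard
      = d ^ (2 * k) := by
    rw [← Nat.card_coe_set_eq]
    rw [Nat.card_congr (⟨fun p => p.1.1, fun x => ⟨(x, x), rfl⟩,
      fun p => by rcases p with ⟨⟨a, b⟩, h⟩; simp only [Set.mem_setOf_eq] at h
                  simp [h],
      fun x => rfl⟩ :
      ↑{p : Fin (d ^ (2 * k)) × Fin (d ^ (2 * k)) | p.1 = p.2} ≃ Fin (d ^ (2 * k)))]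
    rw [Nat.card_eq_fintype_card, Fintype.card_fin]
  have hB : {p : Fin (d ^ (2 * k)) × Fin (d ^ (2 * k)) |
        ∀ r < k, gcoord d (p.2 : ℕ) (2 * r) ≤ gcoord d (p.1 : ℕ) (2 * r) + 1 ∧
          gcoord d (p.1 : ℕ) (2 * r + 1) ≤ gcoord d (p.2 : ℕ) (2 * r + 1) + 1}.ncard
      = ((d ^ 2 + 3 * d - 2) / 2) ^ (2 * k) := by
    rw [← Nat.card_coe_set_eq]
    exact count_B k d hk hd
  rw [hB, hdiag]
end
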